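/- arXiv:1603.03342 — 6 statements merged into one kernel-verified Lean document; each statement's English description precedes it below -/
import Mathlib

section
/- For any N ≥ 2 and any masses m₁,…,m_N > 0: (i) there exists a nonsingular configuration q in (S³)^N and a constant λ ∈ ℝ such that ∇_{qᵢ}U(q) = λ∇_{qᵢ}I(q) for all i and ∇_{qᵢ}U(q) ≠ 0 for some i (an ordinary central configuration in S³); and (ii) there exists a nonsingular configuration q in (H³)^N and a constant λ ∈ ℝ such that ∇_{qᵢ}U(q) = λ∇_{qᵢ}I(q) for all i (a central configuration in H³). -/
noncomputable section
open Real Finset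

/-- Vectors in `ℝ⁴`. -/
abbrev V4 : Type := Fin 4 → ℝ

/-- Euclidean dot product on `ℝ⁴`. -/
def dot4 (p q : V4) : ℝ := p 0 * q 0 + p 1 * q 1 + p 2 * q 2 + p 3 * q 3

/-- Minkowski bilinear form on `ℝ⁴`. -/
def mdot4 (p q : V4) : ℝ := p 0 * q 0 + p 1 * q 1 + p 2 * q 2 - p 3 * q 3

/-- The unit sphere `S³ ⊂ ℝ⁴`. -/
def sphere3 : Set V4 := {p | p 0 ^ 2 + p 1 ^ 2 + p 2 ^ 2 + p 3 ^ 2 = 1}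

/-- The upper hyperbolic sphere `H³ ⊂ ℝ⁴`. -/
def hyper3 : Set V4 := {p | p 0 ^ 2 + p 1 ^ 2 + p 2 ^ 2 - p 3 ^ 2 = -1 ∧ 0 < p 3}

/-- Inverse hyperbolic cosine. -/
def arcosh (x : ℝ) : ℝ := Real.log (x + Real.sqrt (x ^ 2 - 1))

/-- Spherical distance on `S³`. -/
def dS (p q : V4) : ℝ := Real.arccos (dot4 p q)

/-- Hyperbolic distance on `H³`. -/
def dH (p q : V4) : ℝ := _root_.arcosh (-(mdot4 p q))

/-- Gradient of the cotangent force function on `(S³)^N` at the body `i`. -/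
def gradUS {N : ℕ} (m : Fin N → ℝ) (q : Fin N → V4) (i : Fin N) : V4 :=
  ∑ j ∈ Finset.univ.erase i,
    (m i * m j / (Real.sin (dS (q i) (q j))) ^ 3) • (q j - Real.cos (dS (q i) (q j)) • q i)

/-- Gradient of the cotangent force function on `(H³)^N` at the body `i`. -/
def gradUH {N : ℕ} (m : Fin N → ℝ) (q : Fin N → V4) (i : Fin N) : V4 :=
  ∑ j ∈ Finset.univ.erase i,
    (m i * m j / (Real.sinh (dH (q i) (q j))) ^ 3) • (q j - Real.cosh (dH (q i) (q j)) • q i)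

/-- Gradient of the moment of inertia `I(q) = Σ mᵢ(xᵢ²+yᵢ²)` on `(S³)^N` at the body `i`. -/
def gradIS {N : ℕ} (m : Fin N → ℝ) (q : Fin N → V4) (i : Fin N) : V4 :=
  (2 * m i) •
    ![q i 0 * (q i 2 ^ 2 + q i 3 ^ 2), q i 1 * (q i 2 ^ 2 + q i 3 ^ 2),
      -(q i 2 * (q i 0 ^ 2 + q i 1 ^ 2)), -(q i 3 * (q i 0 ^ 2 + q i 1 ^ 2))]

/-- Gradient of the moment of inertia `I(q) = Σ mᵢ(xᵢ²+yᵢ²)` on `(H³)^N` at the body `i`. -/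
def gradIH {N : ℕ} (m : Fin N → ℝ) (q : Fin N → V4) (i : Fin N) : V4 :=
  (2 * m i) •
    ![q i 0 * (q i 3 ^ 2 - q i 2 ^ 2), q i 1 * (q i 3 ^ 2 - q i 2 ^ 2),
      q i 2 * (q i 0 ^ 2 + q i 1 ^ 2), q i 3 * (q i 0 ^ 2 + q i 1 ^ 2)]

/-- The action of the rotation `A_{α,β}(t) ∈ SO(4)` on `ℝ⁴`. -/
def rotA (α β t : ℝ) (p : V4) : V4 :=
  ![Real.cos (α * t) * p 0 - Real.sin (α * t) * p 1,
    Real.sin (α * t) * p 0 + Real.cos (α * t) * p 1,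
    Real.cos (β * t) * p 2 - Real.sin (β * t) * p 3,
    Real.sin (β * t) * p 2 + Real.cos (β * t) * p 3]

/-- The action of the transformation `B_{α,β}(t) ∈ SO(3,1)` on `ℝ⁴`. -/
def rotB (α β t : ℝ) (p : V4) : V4 :=
  ![Real.cos (α * t) * p 0 - Real.sin (α * t) * p 1,
    Real.sin (α * t) * p 0 + Real.cos (α * t) * p 1,
    Real.cosh (β * t) * p 2 + Real.sinh (β * t) * p 3,
    Real.sinh (β * t) * p 2 + Real.cosh (β * t) * p 3]

/-- The great circle `S¹_xy`. -/
def S1xy : Set V4 := {p | p 0 ^ 2 + p 1 ^ 2 = 1 ∧ p 2 = 0 ∧ p 3 = 0}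

/-- The great circle `S¹_zw`. -/
def S1zw : Set V4 := {p | p 2 ^ 2 + p 3 ^ 2 = 1 ∧ p 0 = 0 ∧ p 1 = 0}

/-- The geodesic `H¹_zw`. -/
def H1zw : Set V4 := {p | p 3 ^ 2 - p 2 ^ 2 = 1 ∧ 0 < p 3 ∧ p 0 = 0 ∧ p 1 = 0}

namespace S13
variable {N : ℕ}

abbrev proj (i : Fin N) : (Fin N → ℝ) →L[ℝ] ℝ := ContinuousLinearMap.proj i

lemma hasStrictDerivAt_cot {d : ℝ} (hd : Real.sin d ≠ 0) :
    HasStrictDerivAt (fun u => Real.cos u / Real.sin u) (-(1 / Real.sin d ^ 2)) d := by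
  have h := (Real.hasStrictDerivAt_cos d).div (Real.hasStrictDerivAt_sin d) hd
  refine h.congr_deriv ?_
  field_simp
  linear_combination (-1) * Real.sin_sq_add_cos_sq d

lemma hasStrictDerivAt_coth {d : ℝ} (hd : Real.sinh d ≠ 0) :
    HasStrictDerivAt (fun u => Real.cosh u / Real.sinh u) (-(1 / Real.sinh d ^ 2)) d := by
  have h := (Real.hasStrictDerivAt_cosh d).div (Real.hasStrictDerivAt_sinh d) hd
  refine h.congr_deriv ?_
  field_simp
  linear_combination (-1) * Real.cosh_sq_sub_sinh_sq d

lemma hasStrictFDerivAt_sub_eval (i j : Fin N) (x : Fin N → ℝ) :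
    HasStrictFDerivAt (fun x : Fin N → ℝ => x j - x i)
      ((proj j - proj i : (Fin N → ℝ) →L[ℝ] ℝ)) x :=
  ((proj j).hasStrictFDerivAt.sub ((proj i).hasStrictFDerivAt))

lemma hasStrictFDerivAt_pairSum {g g' : ℝ → ℝ} {x : Fin N → ℝ} (m : Fin N → ℝ)
    (hg : ∀ j : Fin N, ∀ i ∈ Finset.Iio j, HasStrictDerivAt g (g' (x j - x i)) (x j - x i)) :
    HasStrictFDerivAt (fun y : Fin N → ℝ => ∑ j, ∑ i ∈ Finset.Iio j, m i * m j * g (y j - y i))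
      (∑ j, ∑ i ∈ Finset.Iio j,
        (m i * m j * g' (x j - x i)) • (proj j - proj i : (Fin N → ℝ) →L[ℝ] ℝ)) x := by
  refine HasStrictFDerivAt.fun_sum fun j _ => HasStrictFDerivAt.fun_sum fun i hi => ?_
  have h1 := ((hg j i hi).comp_hasStrictFDerivAt x (hasStrictFDerivAt_sub_eval i j x)).const_mul
    (m i * m j)
  rwa [smul_smul] at h1

lemma hasStrictFDerivAt_diagSum {h h' : ℝ → ℝ} {x : Fin N → ℝ} (m : Fin N → ℝ)
    (hh : ∀ i : Fin N, HasStrictDerivAt h (h' (x i)) (x i)) :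
    HasStrictFDerivAt (fun y : Fin N → ℝ => ∑ i, m i * h (y i))
      (∑ i, (m i * h' (x i)) • (proj i : (Fin N → ℝ) →L[ℝ] ℝ)) x := by
  refine HasStrictFDerivAt.fun_sum fun i _ => ?_
  have h1 := ((hh i).comp_hasStrictFDerivAt x (proj i).hasStrictFDerivAt).const_mul (m i)
  rwa [smul_smul] at h1

lemma Ioi_eq_filter' (k : Fin N) : Finset.Ioi k = Finset.univ.filter (k < ·) := by
  ext a; simp

lemma pairDeriv_apply (c : Fin N → Fin N → ℝ) (k : Fin N) :
    (∑ j, ∑ i ∈ Finset.Iio j,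
        (c i j) • (proj j - proj i : (Fin N → ℝ) →L[ℝ] ℝ)) (Pi.single k 1)
      = (∑ i ∈ Finset.Iio k, c i k) - ∑ j ∈ Finset.Ioi k, c k j := by
  rw [ContinuousLinearMap.sum_apply]
  have hterm : ∀ j : Fin N,
      (∑ i ∈ Finset.Iio j, (c i j) • (proj j - proj i : (Fin N → ℝ) →L[ℝ] ℝ))
          (Pi.single k 1)
        = (if j = k then ∑ i ∈ Finset.Iio k, c i k else 0)
            - (if k < j then c k j else 0) := by
    intro j
    rw [ContinuousLinearMap.sum_apply]
    have h2 : ∀ i ∈ Finset.Iio j, ((c i j) • (proj j - proj i : (Fin N → ℝ) →L[ℝ] ℝ))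
        (Pi.single k 1) = (if j = k then c i j else 0) - (if i = k then c i j else 0) := by
      intro i _
      rw [ContinuousLinearMap.smul_apply, ContinuousLinearMap.sub_apply]
      simp only [ContinuousLinearMap.proj_apply, Pi.single_apply, smul_eq_mul]
      by_cases h1 : j = k <;> by_cases hik : i = k <;> simp [h1, hik]
    rw [Finset.sum_congr rfl h2, Finset.sum_sub_distrib]
    congr 1
    · by_cases hj : j = k
      · subst hj; simp
      · simp [hj]
    · rw [Finset.sum_ite_eq' (Finset.Iio j) k (fun i => c i j)]
      simp [Finset.mem_Iio]
  rw [Finset.sum_congr rfl (fun j _ => hterm j), Finset.sum_sub_distrib]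
  congr 1
  · rw [Finset.sum_ite_eq' Finset.univ k _]; simp
  · rw [Ioi_eq_filter', Finset.sum_filter]

lemma diagDeriv_apply (c : Fin N → ℝ) (k : Fin N) :
    (∑ i, c i • (proj i : (Fin N → ℝ) →L[ℝ] ℝ)) (Pi.single k 1) = c k := by
  rw [ContinuousLinearMap.sum_apply]
  have : ∀ i ∈ Finset.univ, (c i • (proj i : (Fin N → ℝ) →L[ℝ] ℝ)) (Pi.single k 1)
      = if i = k then c i else 0 := by
    intro i _
    rw [ContinuousLinearMap.smul_apply]
    simp only [ContinuousLinearMap.proj_apply, Pi.single_apply, smul_eq_mul]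
    by_cases h : i = k <;> simp [h]
  rw [Finset.sum_congr rfl this, Finset.sum_ite_eq' Finset.univ k _]
  simp

lemma erase_split (k : Fin N) (f : Fin N → ℝ) :
    ∑ j ∈ Finset.univ.erase k, f j
      = (∑ j ∈ Finset.Iio k, f j) + ∑ j ∈ Finset.Ioi k, f j := by
  have hu : Finset.univ.erase k = Finset.Iio k ∪ Finset.Ioi k := by
    ext a
    simp only [Finset.mem_erase, Finset.mem_univ, and_true, Finset.mem_union,
      Finset.mem_Iio, Finset.mem_Ioi]
    exact ne_iff_lt_or_gt
  rw [hu, Finset.sum_union]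
  exact Finset.disjoint_left.2 fun a ha hb =>
    absurd (Finset.mem_Iio.1 ha) (not_lt.2 (Finset.mem_Ioi.1 hb).le)

/-- hyperbolic cotangent potential in arclength coordinates -/
def Uh (m : Fin N → ℝ) (y : Fin N → ℝ) : ℝ :=
  ∑ j, ∑ i ∈ Finset.Iio j, m i * m j * (Real.cosh (y j - y i) / Real.sinh (y j - y i))

/-- hyperbolic moment of inertia in arclength coordinates -/
def Ih (m : Fin N → ℝ) (y : Fin N → ℝ) : ℝ := ∑ i, m i * Real.sinh (y i) ^ 2

def Gh (m : Fin N → ℝ) (y : Fin N → ℝ) : ℝ := Uh m y + Ih m y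

lemma aux_neg {A t : ℝ} (ht : t < 0) : A / |t| ^ 3 * t = -(A * (1 / t ^ 2)) := by
  have ht' : t ≠ 0 := ne_of_lt ht
  have hnt : -t ≠ 0 := neg_ne_zero.2 ht'
  rw [abs_of_neg ht]
  field_simp

lemma aux_pos {A t : ℝ} (ht : 0 < t) : A / |t| ^ 3 * t = A * (1 / t ^ 2) := by
  have ht' : t ≠ 0 := ne_of_gt ht
  rw [abs_of_pos ht]
  field_simp
  try rw [← mul_pow, mul_inv_cancel₀ ht', one_pow, mul_one]
  try ring

lemma sinh_le_three_mul {d : ℝ} (h0 : 0 < d) (h1 : d ≤ 1) : Real.sinh d ≤ 3 * d := by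
  have he : 1 - 2 * d ≤ Real.exp (-(2 * d)) := by
    have := Real.add_one_le_exp (-(2 * d)); linarith
  have hed : Real.exp d ≤ Real.exp 1 := Real.exp_le_exp.2 h1
  have he1 : Real.exp 1 < 2.7182818286 := Real.exp_one_lt_d9
  have hpos := Real.exp_pos d
  have hprod : Real.exp (-d) = Real.exp d * Real.exp (-(2 * d)) := by
    rw [← Real.exp_add]; ring_nf
  have key : Real.exp d * (1 - Real.exp (-(2 * d))) ≤ Real.exp d * (2 * d) :=
    mul_le_mul_of_nonneg_left (by linarith) hpos.le
  have key2 : Real.exp d * (2 * d) ≤ 3 * (2 * d) :=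
    mul_le_mul_of_nonneg_right (by linarith) (by linarith)
  rw [Real.sinh_eq, hprod]
  nlinarith

set_option maxHeartbeats 2000000 in
theorem hyp_points (N : ℕ) (hN : 2 ≤ N) (m : Fin N → ℝ) (hm : ∀ i, 0 < m i) :
    ∃ s : Fin N → ℝ,
      (∀ i j : Fin N, i < j → s i < s j) ∧
      ∀ k, (∑ j ∈ Finset.univ.erase k,
          m k * m j / |Real.sinh (s j - s k)| ^ 3 * Real.sinh (s j - s k))
        = -(2 * m k * Real.sinh (s k) * Real.cosh (s k)) := by
  classical
  have hNpos : 0 < N := by omega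
  obtain ⟨imin, -, hminle⟩ := Finset.exists_min_image Finset.univ m ⟨⟨0, hNpos⟩, Finset.mem_univ _⟩
  have hμpos : 0 < m imin := hm imin
  set μ := m imin with hμdef
  have hμle : ∀ i, μ ≤ m i := fun i => hminle i (Finset.mem_univ i)
  -- witness
  set w : Fin N → ℝ := fun i => (i : ℕ) with hwdef
  obtain ⟨M, hMdef⟩ : ∃ x : ℝ, x = max (Gh m w) 1 := ⟨_, rfl⟩
  have hM1 : (1:ℝ) ≤ M := hMdef ▸ le_max_right _ _
  have hMw : Gh m w ≤ M := hMdef ▸ le_max_left _ _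
  have hMpos : 0 < M := lt_of_lt_of_le one_pos hM1
  obtain ⟨R, hRdef⟩ : ∃ x : ℝ, x = Real.sqrt (M / μ) + N + 1 := ⟨_, rfl⟩
  have hsq0 : 0 ≤ Real.sqrt (M / μ) := Real.sqrt_nonneg _
  have hRN : (N : ℝ) ≤ R := by rw [hRdef]; linarith
  have hRpos : 0 < R := lt_of_lt_of_le (by exact_mod_cast hNpos) hRN
  have hRsq : M < μ * R ^ 2 := by
    have h1 : Real.sqrt (M / μ) ^ 2 = M / μ :=
      Real.sq_sqrt (le_of_lt (div_pos hMpos hμpos))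
    have h2 : Real.sqrt (M / μ) + 1 ≤ R := by
      rw [hRdef]; have : (0:ℝ) ≤ N := Nat.cast_nonneg N; linarith
    have h3 : M / μ + 1 ≤ R ^ 2 := by nlinarith
    have h5 : M / μ < R ^ 2 := by linarith
    have h6 := (div_lt_iff₀ hμpos).1 h5
    nlinarith
  obtain ⟨δ, hδdef⟩ : ∃ x : ℝ, x = min 1 (μ ^ 2 / (3 * M + 1)) := ⟨_, rfl⟩
  have hδpos : 0 < δ := hδdef ▸ lt_min one_pos (by positivity)
  have hδ1 : δ ≤ 1 := hδdef ▸ min_le_left _ _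
  have hδM : M < μ ^ 2 * (1 / (3 * δ)) := by
    have h1 : δ ≤ μ ^ 2 / (3 * M + 1) := hδdef ▸ min_le_right _ _
    have h2 : δ * (3 * M + 1) ≤ μ ^ 2 := by
      have := (le_div_iff₀ (by positivity : (0:ℝ) < 3 * M + 1)).1 h1
      linarith
    have h3 : M < μ ^ 2 / (3 * δ) := by
      rw [lt_div_iff₀ (by positivity : (0:ℝ) < 3 * δ)]
      nlinarith
    rwa [mul_one_div]
  have hcothδ : 1 / (3 * δ) ≤ Real.cosh δ / Real.sinh δ := by
    have hsp : 0 < Real.sinh δ := Real.sinh_pos_iff.2 hδpos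
    have hs3 : Real.sinh δ ≤ 3 * δ := sinh_le_three_mul hδpos hδ1
    have hc1 : 1 ≤ Real.cosh δ := Real.one_le_cosh δ
    rw [div_le_div_iff₀ (by positivity) hsp]
    nlinarith
  -- the domain
  set D : Set (Fin N → ℝ) :=
    (Set.pi Set.univ fun _ : Fin N => Set.Icc (-R) R) ∩
      {x | ∀ i j : Fin N, i < j → x i + δ ≤ x j} with hDdef
  have hwD : w ∈ D := by
    constructor
    · intro i _
      have h0 : (0:ℝ) ≤ (i : ℕ) := Nat.cast_nonneg _
      have h1 : ((i:ℕ) : ℝ) ≤ N := by exact_mod_cast (le_of_lt i.isLt)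
      exact ⟨by simp only [hwdef]; linarith, by simp only [hwdef]; linarith⟩
    · intro i j hij
      have h1 : ((i:ℕ) : ℝ) + 1 ≤ ((j:ℕ) : ℝ) := by exact_mod_cast Fin.lt_def.1 hij
      simp only [hwdef, Set.mem_setOf_eq]
      linarith
  have hgapc : IsClosed {x : Fin N → ℝ | ∀ i j : Fin N, i < j → x i + δ ≤ x j} := by
    have : {x : Fin N → ℝ | ∀ i j : Fin N, i < j → x i + δ ≤ x j}
        = ⋂ (i : Fin N) (j : Fin N), {x : Fin N → ℝ | i < j → x i + δ ≤ x j} := by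
      ext x; simp [Set.mem_iInter]
    rw [this]
    refine isClosed_iInter fun i => isClosed_iInter fun j => ?_
    by_cases h : i < j
    · simp only [h, true_implies]
      exact isClosed_le ((continuous_apply i).add continuous_const) (continuous_apply j)
    · simp only [h, false_implies]
      exact isClosed_univ
  have hDcomp : IsCompact D :=
    (isCompact_univ_pi fun _ => isCompact_Icc).inter_right hgapc
  have hdiffpos : ∀ x ∈ D, ∀ (i j : Fin N), i < j → 0 < x j - x i := by
    intro x hx i j hij
    have := hx.2 i j hij
    linarith
  have hGcont : ContinuousOn (Gh m) D := by
    apply ContinuousOn.add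
    · apply continuousOn_finset_sum
      intro j _
      apply continuousOn_finset_sum
      intro i hi
      have hi' : i < j := Finset.mem_Iio.1 hi
      apply ContinuousOn.mul continuousOn_const
      apply ContinuousOn.div
      · exact (Real.continuous_cosh.comp
          ((continuous_apply j).sub (continuous_apply i))).continuousOn
      · exact (Real.continuous_sinh.comp
          ((continuous_apply j).sub (continuous_apply i))).continuousOn
      · intro x hx
        exact ne_of_gt (Real.sinh_pos_iff.2 (hdiffpos x hx i j hi'))
    · exact (continuous_finset_sum _ fun i _ =>
        continuous_const.mul ((Real.continuous_sinh.comp (continuous_apply i)).pow 2)).continuousOn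
  obtain ⟨p, hpD, hpmin⟩ := hDcomp.exists_isMinOn ⟨w, hwD⟩ hGcont
  have hpmin' : ∀ x ∈ D, Gh m p ≤ Gh m x := fun x hx => hpmin hx
  have hGpM : Gh m p ≤ M := le_trans (hpmin' w hwD) hMw
  have hUterm_nonneg : ∀ x ∈ D, ∀ (j : Fin N), ∀ i ∈ Finset.Iio j,
      0 ≤ m i * m j * (Real.cosh (x j - x i) / Real.sinh (x j - x i)) := by
    intro x hx j i hi
    have hij := Finset.mem_Iio.1 hi
    have hd := hdiffpos x hx i j hij
    exact mul_nonneg (mul_nonneg (hm i).le (hm j).le)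
      (div_nonneg (Real.cosh_pos _).le (Real.sinh_pos_iff.2 hd).le)
  have hUnonneg : ∀ x ∈ D, 0 ≤ Uh m x := by
    intro x hx
    exact Finset.sum_nonneg fun j _ =>
      Finset.sum_nonneg fun i hi => hUterm_nonneg x hx j i hi
  have hInonneg : ∀ x : Fin N → ℝ, 0 ≤ Ih m x :=
    fun x => Finset.sum_nonneg fun i _ => mul_nonneg (hm i).le (sq_nonneg _)
  -- strictly inside the box
  have hbox : ∀ i, |p i| < R := by
    intro i
    by_contra hcon
    push_neg at hcon
    have h1 : m i * Real.sinh (p i) ^ 2 ≤ Ih m p :=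
      Finset.single_le_sum (f := fun i => m i * Real.sinh (p i) ^ 2)
        (fun i _ => mul_nonneg (hm i).le (sq_nonneg _)) (Finset.mem_univ i)
    have h3 : R ^ 2 ≤ Real.sinh (p i) ^ 2 := by
      have hRs : R ≤ Real.sinh |p i| := by
        calc R ≤ |p i| := hcon
          _ ≤ Real.sinh |p i| := by
            rcases lt_or_eq_of_le (abs_nonneg (p i)) with h | h
            · exact le_of_lt (Real.self_lt_sinh_iff.2 h)
            · rw [← h]; simp
      have habs : Real.sinh |p i| ^ 2 = Real.sinh (p i) ^ 2 := by
        rcases abs_cases (p i) with ⟨h, -⟩ | ⟨h, -⟩ <;> rw [h] <;> simp [Real.sinh_neg]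
      nlinarith
    have h4 : μ * R ^ 2 ≤ m i * Real.sinh (p i) ^ 2 :=
      mul_le_mul (hμle i) h3 (by positivity) (le_of_lt (hm i))
    have h5 := hUnonneg p hpD
    have h6 : Gh m p = Uh m p + Ih m p := rfl
    linarith
  -- strictly spaced gaps
  have hgaps : ∀ i j : Fin N, i < j → p i + δ < p j := by
    intro i j hij
    rcases lt_or_eq_of_le (hpD.2 i j hij) with h | h
    · exact h
    exfalso
    have hd : p j - p i = δ := by linarith
    have hterm : μ ^ 2 * (1 / (3 * δ))
        ≤ m i * m j * (Real.cosh (p j - p i) / Real.sinh (p j - p i)) := by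
      rw [hd]
      have hμμ : μ ^ 2 ≤ m i * m j := by
        have h1 := hμle i; have h2 := hμle j
        nlinarith
      have hcoth_nonneg : 0 ≤ Real.cosh δ / Real.sinh δ :=
        div_nonneg (Real.cosh_pos _).le (Real.sinh_pos_iff.2 hδpos).le
      calc μ ^ 2 * (1 / (3 * δ)) ≤ μ ^ 2 * (Real.cosh δ / Real.sinh δ) :=
            mul_le_mul_of_nonneg_left hcothδ (sq_nonneg μ)
        _ ≤ m i * m j * (Real.cosh δ / Real.sinh δ) :=
            mul_le_mul_of_nonneg_right hμμ hcoth_nonneg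
    have hinner : m i * m j * (Real.cosh (p j - p i) / Real.sinh (p j - p i))
        ≤ ∑ i' ∈ Finset.Iio j, m i' * m j * (Real.cosh (p j - p i') / Real.sinh (p j - p i')) :=
      Finset.single_le_sum
        (f := fun i' => m i' * m j * (Real.cosh (p j - p i') / Real.sinh (p j - p i')))
        (fun i' hi' => hUterm_nonneg p hpD j i' hi') (Finset.mem_Iio.2 hij)
    have houter : (∑ i' ∈ Finset.Iio j,
          m i' * m j * (Real.cosh (p j - p i') / Real.sinh (p j - p i'))) ≤ Uh m p :=
      Finset.single_le_sum
        (f := fun j' => ∑ i' ∈ Finset.Iio j',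
          m i' * m j' * (Real.cosh (p j' - p i') / Real.sinh (p j' - p i')))
        (fun j' _ => Finset.sum_nonneg fun i' hi' => hUterm_nonneg p hpD j' i' hi')
        (Finset.mem_univ j)
    have h6 : Gh m p = Uh m p + Ih m p := rfl
    have h7 := hInonneg p
    linarith [hδM, hGpM]
  have hporder : ∀ i j : Fin N, i < j → p i < p j := by
    intro i j hij; have := hgaps i j hij; linarith
  -- local minimum
  have hVopen : IsOpen {x : Fin N → ℝ | (∀ i, |x i| < R) ∧
      ∀ i j : Fin N, i < j → x i + δ < x j} := by
    have : {x : Fin N → ℝ | (∀ i, |x i| < R) ∧ ∀ i j : Fin N, i < j → x i + δ < x j}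
        = (⋂ i, {x : Fin N → ℝ | |x i| < R}) ∩
          ⋂ (i : Fin N) (j : Fin N), {x : Fin N → ℝ | i < j → x i + δ < x j} := by
      ext x; simp [Set.mem_iInter]
    rw [this]
    apply IsOpen.inter
    · exact isOpen_iInter_of_finite fun i =>
        (isOpen_lt (continuous_apply i).abs continuous_const)
    · refine isOpen_iInter_of_finite fun i => isOpen_iInter_of_finite fun j => ?_
      by_cases h : i < j
      · simp only [h, true_implies]
        exact isOpen_lt ((continuous_apply i).add continuous_const) (continuous_apply j)
      · simp only [h, false_implies]
        exact isOpen_univ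
  have hpV : p ∈ {x : Fin N → ℝ | (∀ i, |x i| < R) ∧
      ∀ i j : Fin N, i < j → x i + δ < x j} := ⟨hbox, hgaps⟩
  have hVD : {x : Fin N → ℝ | (∀ i, |x i| < R) ∧
      ∀ i j : Fin N, i < j → x i + δ < x j} ⊆ D := by
    intro x hx
    constructor
    · intro i _
      have := hx.1 i
      rw [abs_lt] at this
      exact ⟨le_of_lt this.1, le_of_lt this.2⟩
    · intro i j hij
      exact le_of_lt (hx.2 i j hij)
  have hlocmin : IsLocalMin (Gh m) p := by
    filter_upwards [hVopen.mem_nhds hpV] with x hx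
    exact hpmin' x (hVD hx)
  -- derivative
  have hsinh_ne : ∀ (j : Fin N), ∀ i ∈ Finset.Iio j, Real.sinh (p j - p i) ≠ 0 := by
    intro j i hi
    exact ne_of_gt (Real.sinh_pos_iff.2 (by
      have := hporder i j (Finset.mem_Iio.1 hi); linarith))
  have hU' : HasStrictFDerivAt (Uh m)
      (∑ j, ∑ i ∈ Finset.Iio j,
        (m i * m j * (-(1 / Real.sinh (p j - p i) ^ 2))) •
          (proj j - proj i : (Fin N → ℝ) →L[ℝ] ℝ)) p :=
    hasStrictFDerivAt_pairSum (g := fun u => Real.cosh u / Real.sinh u)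
      (g' := fun u => -(1 / Real.sinh u ^ 2)) m
      (fun j i hi => hasStrictDerivAt_coth (hsinh_ne j i hi))
  have hI' : HasStrictFDerivAt (Ih m)
      (∑ i, (m i * (2 * Real.sinh (p i) * Real.cosh (p i))) •
        (proj i : (Fin N → ℝ) →L[ℝ] ℝ)) p := by
    apply hasStrictFDerivAt_diagSum (h := fun u => Real.sinh u ^ 2)
      (h' := fun u => 2 * Real.sinh u * Real.cosh u) m
    intro i
    have h := (Real.hasStrictDerivAt_sinh (p i)).mul (Real.hasStrictDerivAt_sinh (p i))
    have h2 : (fun u : ℝ => Real.sinh u ^ 2) = fun u => Real.sinh u * Real.sinh u := by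
      funext u; ring
    rw [h2]
    refine h.congr_deriv ?_
    ring
  have hG' : HasStrictFDerivAt (Gh m) _ p := hU'.add hI'
  have hzero := hlocmin.hasFDerivAt_eq_zero hG'.hasFDerivAt
  refine ⟨p, hporder, fun k => ?_⟩
  have hev := congrArg (fun (L : (Fin N → ℝ) →L[ℝ] ℝ) => L (Pi.single k 1)) hzero
  simp only [ContinuousLinearMap.add_apply, ContinuousLinearMap.zero_apply] at hev
  rw [pairDeriv_apply, diagDeriv_apply] at hev
  rw [erase_split k]
  have hIio : ∀ i ∈ Finset.Iio k,
      m k * m i / |Real.sinh (p i - p k)| ^ 3 * Real.sinh (p i - p k)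
        = m i * m k * (-(1 / Real.sinh (p k - p i) ^ 2)) := by
    intro i hi
    have hik : p i < p k := hporder i k (Finset.mem_Iio.1 hi)
    have hneg : Real.sinh (p i - p k) < 0 := Real.sinh_neg_iff.2 (by linarith)
    have h1 : Real.sinh (p k - p i) = -Real.sinh (p i - p k) := by
      rw [show p k - p i = -(p i - p k) by ring, Real.sinh_neg]
    rw [h1, aux_neg hneg]
    ring
  have hIoi : ∀ j ∈ Finset.Ioi k,
      m k * m j / |Real.sinh (p j - p k)| ^ 3 * Real.sinh (p j - p k)
        = -(m k * m j * (-(1 / Real.sinh (p j - p k) ^ 2))) := by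
    intro j hj
    have hkj : p k < p j := hporder k j (Finset.mem_Ioi.1 hj)
    have hpos : 0 < Real.sinh (p j - p k) := Real.sinh_pos_iff.2 (by linarith)
    rw [aux_pos hpos]
    ring
  rw [Finset.sum_congr rfl hIio, Finset.sum_congr rfl hIoi, Finset.sum_neg_distrib]
  linarith [hev]
/-- spherical cotangent potential in angle coordinates -/
def Us (m : Fin N → ℝ) (y : Fin N → ℝ) : ℝ :=
  ∑ j, ∑ i ∈ Finset.Iio j, m i * m j * (Real.cos (y j - y i) / Real.sin (y j - y i))

/-- spherical moment of inertia in angle coordinates -/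
def Is (m : Fin N → ℝ) (y : Fin N → ℝ) : ℝ := ∑ i, m i * Real.cos (y i) ^ 2

set_option maxHeartbeats 2000000 in
theorem sph_angles (N : ℕ) (hN : 2 ≤ N) (m : Fin N → ℝ) (hm : ∀ i, 0 < m i) :
    ∃ (θ : Fin N → ℝ) (lam : ℝ),
      (∀ i, 0 < θ i ∧ θ i < π) ∧ (∀ i j : Fin N, i < j → θ i < θ j) ∧
      ∀ k, (∑ j ∈ Finset.univ.erase k,
          m k * m j / |Real.sin (θ j - θ k)| ^ 3 * Real.sin (θ j - θ k))
        = lam * (-2 * m k * Real.cos (θ k) * Real.sin (θ k)) := by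
  classical
  have hNpos : 0 < N := by omega
  have hπ := Real.pi_pos
  obtain ⟨imin, -, hminle⟩ := Finset.exists_min_image Finset.univ m ⟨⟨0, hNpos⟩, Finset.mem_univ _⟩
  have hμpos : 0 < m imin := hm imin
  set μ := m imin with hμdef
  have hμle : ∀ i, μ ≤ m i := fun i => hminle i (Finset.mem_univ i)
  set S := ∑ i, m i with hSdef
  have hSpos : 0 < S := Finset.sum_pos (fun i _ => hm i) ⟨⟨0, hNpos⟩, Finset.mem_univ _⟩
  -- choose ε
  obtain ⟨ε, hεdef⟩ : ∃ x : ℝ, x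
      = min (π / (4 * (N + 1))) (Real.sqrt (μ / (2 * S + 1)) / (N + 1)) := ⟨_, rfl⟩
  have hεpos : 0 < ε := by
    rw [hεdef]
    apply lt_min (by positivity)
    have h0 : 0 < Real.sqrt (μ / (2 * S + 1)) := Real.sqrt_pos.2 (by positivity)
    positivity
  have hNε : (N : ℝ) * ε ≤ π / 4 := by
    have h1 : ε ≤ π / (4 * (N + 1)) := hεdef ▸ min_le_left _ _
    have h3 : (N : ℝ) * ε ≤ (N : ℝ) * (π / (4 * (N + 1))) :=
      mul_le_mul_of_nonneg_left h1 (Nat.cast_nonneg N)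
    have h4 : (N : ℝ) * (π / (4 * (N + 1))) ≤ π / 4 := by
      rw [mul_div_assoc', div_le_div_iff₀ (by positivity) (by norm_num : (0:ℝ) < 4)]
      nlinarith [Nat.cast_nonneg (α := ℝ) N]
    linarith
  have hNε2 : ((N : ℝ) * ε) ^ 2 ≤ μ / (2 * S + 1) := by
    have h1 : ε ≤ Real.sqrt (μ / (2 * S + 1)) / (N + 1) := hεdef ▸ min_le_right _ _
    have h2 : (N : ℝ) * ε ≤ Real.sqrt (μ / (2 * S + 1)) := by
      have h3 : (N : ℝ) * ε ≤ (N : ℝ) * (Real.sqrt (μ / (2 * S + 1)) / (N + 1)) :=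
        mul_le_mul_of_nonneg_left h1 (Nat.cast_nonneg N)
      have h5 : (N : ℝ) / (N + 1) ≤ 1 := by
        rw [div_le_one (by positivity)]; linarith
      have h4 : (N : ℝ) * (Real.sqrt (μ / (2 * S + 1)) / (N + 1))
          ≤ Real.sqrt (μ / (2 * S + 1)) := by
        calc (N : ℝ) * (Real.sqrt (μ / (2 * S + 1)) / (N + 1))
            = ((N : ℝ) / (N + 1)) * Real.sqrt (μ / (2 * S + 1)) := by ring
          _ ≤ 1 * Real.sqrt (μ / (2 * S + 1)) :=
              mul_le_mul_of_nonneg_right h5 (Real.sqrt_nonneg _)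
          _ = Real.sqrt (μ / (2 * S + 1)) := one_mul _
      linarith
    have h5 : 0 ≤ (N : ℝ) * ε := by positivity
    calc ((N : ℝ) * ε) ^ 2 ≤ Real.sqrt (μ / (2 * S + 1)) ^ 2 := by nlinarith
      _ = μ / (2 * S + 1) := Real.sq_sqrt (by positivity)
  -- the witness configuration
  obtain ⟨w, hwdef⟩ : ∃ w : Fin N → ℝ, w = fun i : Fin N => π / 2 + ((i : ℕ) + 1) * ε := ⟨_, rfl⟩
  have hwi : ∀ i : Fin N, ((i : ℕ) + 1 : ℝ) * ε ≤ (N : ℝ) * ε := by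
    intro i
    have h1 : ((i : ℕ) + 1 : ℝ) ≤ N := by exact_mod_cast i.isLt
    exact mul_le_mul_of_nonneg_right h1 hεpos.le
  have hwrange : ∀ i : Fin N, π / 2 < w i ∧ w i < π := by
    intro i
    have h1 : 0 < ((i : ℕ) + 1 : ℝ) * ε := by positivity
    have h2 := hwi i
    constructor
    · rw [hwdef]; dsimp only; linarith
    · rw [hwdef]; dsimp only; linarith [hNε]
  have hwgap : ∀ i j : Fin N, i < j → w i + ε ≤ w j := by
    intro i j hij
    have h1 : ((i : ℕ) : ℝ) + 1 ≤ ((j : ℕ) : ℝ) := by exact_mod_cast Fin.lt_def.1 hij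
    rw [hwdef]; dsimp only
    nlinarith
  -- the moment of inertia level
  obtain ⟨c, hcdef⟩ : ∃ x : ℝ, x = Is m w := ⟨_, rfl⟩
  have hwcos : ∀ i : Fin N, Real.cos (w i) = -Real.sin (((i : ℕ) + 1) * ε) := by
    intro i
    rw [hwdef]; dsimp only
    rw [add_comm (π / 2) _, Real.cos_add_pi_div_two]
  have hcpos : 0 < c := by
    rw [hcdef, Is]
    apply Finset.sum_pos _ ⟨⟨0, hNpos⟩, Finset.mem_univ _⟩
    intro i _
    apply mul_pos (hm i)
    have h1 : 0 < ((i : ℕ) + 1 : ℝ) * ε := by positivity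
    have h2 : ((i : ℕ) + 1 : ℝ) * ε < π := by nlinarith [hwi i, hNε]
    have h3 : 0 < Real.sin (((i : ℕ) + 1) * ε) := Real.sin_pos_of_pos_of_lt_pi h1 h2
    rw [hwcos i]
    nlinarith
  have hc2 : 2 * c < μ := by
    have hterm : ∀ i : Fin N, m i * Real.cos (w i) ^ 2 ≤ m i * (μ / (2 * S + 1)) := by
      intro i
      apply mul_le_mul_of_nonneg_left _ (hm i).le
      rw [hwcos i]
      have h1 : 0 ≤ ((i : ℕ) + 1 : ℝ) * ε := by positivity
      have h2 : Real.sin (((i : ℕ) + 1) * ε) ≤ ((i : ℕ) + 1 : ℝ) * ε := Real.sin_le h1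
      have h2' : 0 ≤ Real.sin (((i : ℕ) + 1) * ε) := by
        apply Real.sin_nonneg_of_nonneg_of_le_pi h1
        nlinarith [hwi i, hNε]
      have h3 : Real.sin (((i : ℕ) + 1) * ε) ^ 2 ≤ (((i : ℕ) + 1 : ℝ) * ε) ^ 2 := by nlinarith
      have h4 : ((((i : ℕ) + 1) : ℝ) * ε) ^ 2 ≤ ((N : ℝ) * ε) ^ 2 := by
        have h6 := hwi i
        nlinarith [hεpos.le, h1]
      calc (-Real.sin (((i : ℕ) + 1) * ε)) ^ 2 = Real.sin (((i : ℕ) + 1) * ε) ^ 2 := by ring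
        _ ≤ (((N : ℝ)) * ε) ^ 2 := le_trans h3 h4
        _ ≤ μ / (2 * S + 1) := hNε2
    have hsum : c ≤ S * (μ / (2 * S + 1)) := by
      rw [hcdef, Is]
      calc (∑ i, m i * Real.cos (w i) ^ 2) ≤ ∑ i, m i * (μ / (2 * S + 1)) :=
            Finset.sum_le_sum fun i _ => hterm i
        _ = S * (μ / (2 * S + 1)) := by rw [← Finset.sum_mul]
    have hq : 0 < μ / (2 * S + 1) := by positivity
    have hqe : μ / (2 * S + 1) * (2 * S + 1) = μ :=
      div_mul_cancel₀ _ (by positivity)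
    nlinarith
  -- the angle bound β
  obtain ⟨r0, hr0def⟩ : ∃ x : ℝ, x = Real.sqrt (c / μ) := ⟨_, rfl⟩
  have hr0pos : 0 < r0 := hr0def ▸ Real.sqrt_pos.2 (by positivity)
  have hr0sq : r0 ^ 2 = c / μ := hr0def ▸ Real.sq_sqrt (by positivity)
  have hcμ : c / μ < 1 / 2 := by
    rw [div_lt_div_iff₀ hμpos (by norm_num)]
    linarith
  have hr0lt : r0 < 1 := by nlinarith
  obtain ⟨β, hβdef⟩ : ∃ x : ℝ, x = Real.arccos r0 := ⟨_, rfl⟩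
  have hβpos : 0 < β := hβdef ▸ Real.arccos_pos.2 hr0lt
  have hβπ2 : β ≤ π / 2 := hβdef ▸ Real.arccos_le_pi_div_two.2 hr0pos.le
  have hcosβ : Real.cos β = r0 := hβdef ▸ Real.cos_arccos (by linarith) hr0lt.le
  have hβ4 : π / 4 ≤ β := by
    by_contra hlt
    push_neg at hlt
    have h2 : 0 < Real.cos (2 * β) :=
      Real.cos_pos_of_mem_Ioo ⟨by linarith, by linarith⟩
    have h3 := Real.cos_two_mul β
    rw [hcosβ] at h3
    rw [hr0sq] at h3
    nlinarith
  -- the derived box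
  have hbox : ∀ x : Fin N → ℝ, (∀ i, 0 ≤ x i ∧ x i ≤ π) → Is m x = c →
      ∀ i, β ≤ x i ∧ x i ≤ π - β := by
    intro x hx hIc i
    have h1 : m i * Real.cos (x i) ^ 2 ≤ Is m x := by
      rw [Is]
      exact Finset.single_le_sum (f := fun i => m i * Real.cos (x i) ^ 2)
        (fun i _ => mul_nonneg (hm i).le (sq_nonneg _)) (Finset.mem_univ i)
    have h1' : m i * Real.cos (x i) ^ 2 ≤ c := hIc ▸ h1
    have h2 : Real.cos (x i) ^ 2 ≤ c / μ := by
      have h3 : Real.cos (x i) ^ 2 ≤ c / m i := by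
        rw [le_div_iff₀ (hm i)]; nlinarith
      have h4 : c / m i ≤ c / μ := div_le_div_of_nonneg_left hcpos.le hμpos (hμle i)
      linarith
    have habs : |Real.cos (x i)| ≤ r0 := by
      rw [← Real.sqrt_sq_eq_abs, hr0def]
      exact Real.sqrt_le_sqrt h2
    obtain ⟨habs1, habs2⟩ := abs_le.1 habs
    constructor
    · by_contra hlt
      push_neg at hlt
      have h5 := Real.cos_lt_cos_of_nonneg_of_le_pi (hx i).1 (by linarith : β ≤ π) hlt
      rw [hcosβ] at h5
      linarith
    · by_contra hlt
      push_neg at hlt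
      have h5 := Real.cos_lt_cos_of_nonneg_of_le_pi (by linarith : (0:ℝ) ≤ π - β)
        (hx i).2 hlt
      rw [Real.cos_pi_sub, hcosβ] at h5
      linarith
  -- bounds M and δ
  obtain ⟨M, hMdef⟩ : ∃ x : ℝ, x = max (Us m w) 1 := ⟨_, rfl⟩
  have hM1 : (1:ℝ) ≤ M := hMdef ▸ le_max_right _ _
  have hMw : Us m w ≤ M := hMdef ▸ le_max_left _ _
  have hMpos : 0 < M := lt_of_lt_of_le one_pos hM1
  obtain ⟨δ, hδdef⟩ : ∃ x : ℝ, x = min ε (min 1 (μ ^ 2 / (2 * M + 1))) := ⟨_, rfl⟩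
  have hδpos : 0 < δ :=
    hδdef ▸ lt_min hεpos (lt_min one_pos (by positivity))
  have hδε : δ ≤ ε := hδdef ▸ min_le_left _ _
  have hδ1 : δ ≤ 1 := hδdef ▸ le_trans (min_le_right _ _) (min_le_left _ _)
  have hδM : M < μ ^ 2 * (1 / (2 * δ)) := by
    have h1 : δ ≤ μ ^ 2 / (2 * M + 1) :=
      hδdef ▸ le_trans (min_le_right _ _) (min_le_right _ _)
    have h2 : δ * (2 * M + 1) ≤ μ ^ 2 := by
      have := (le_div_iff₀ (by positivity : (0:ℝ) < 2 * M + 1)).1 h1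
      linarith
    have h3 : M < μ ^ 2 / (2 * δ) := by
      rw [lt_div_iff₀ (by positivity : (0:ℝ) < 2 * δ)]
      nlinarith
    rwa [mul_one_div]
  have hδπ : δ < π := by nlinarith [Real.pi_gt_three]
  have hcotδ : 1 / (2 * δ) ≤ Real.cos δ / Real.sin δ := by
    have hsp : 0 < Real.sin δ := Real.sin_pos_of_pos_of_lt_pi hδpos hδπ
    have hsle : Real.sin δ ≤ δ := Real.sin_le hδpos.le
    have hcge : 1 - δ ^ 2 / 2 ≤ Real.cos δ := Real.one_sub_sq_div_two_le_cos
    have hc12 : 1 / 2 ≤ Real.cos δ := by nlinarith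
    rw [div_le_div_iff₀ (by positivity) hsp]
    nlinarith
  -- the domain
  set D : Set (Fin N → ℝ) :=
    (Set.pi Set.univ fun _ : Fin N => Set.Icc (β / 2) (π - β / 2)) ∩
      ({x | ∀ i j : Fin N, i < j → x i + δ ≤ x j} ∩ {x | Is m x = c}) with hDdef
  have hIscont : Continuous (Is m) := by
    apply continuous_finset_sum
    intro i _
    exact continuous_const.mul ((Real.continuous_cos.comp (continuous_apply i)).pow 2)
  have hgapc : IsClosed {x : Fin N → ℝ | ∀ i j : Fin N, i < j → x i + δ ≤ x j} := by
    have h : {x : Fin N → ℝ | ∀ i j : Fin N, i < j → x i + δ ≤ x j}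
        = ⋂ (i : Fin N) (j : Fin N), {x : Fin N → ℝ | i < j → x i + δ ≤ x j} := by
      ext x; simp [Set.mem_iInter]
    rw [h]
    refine isClosed_iInter fun i => isClosed_iInter fun j => ?_
    by_cases hij : i < j
    · simp only [hij, true_implies]
      exact isClosed_le ((continuous_apply i).add continuous_const) (continuous_apply j)
    · simp only [hij, false_implies]
      exact isClosed_univ
  have hDcomp : IsCompact D :=
    (isCompact_univ_pi fun _ => isCompact_Icc).inter_right
      (hgapc.inter (isClosed_eq hIscont continuous_const))
  have hwD : w ∈ D := by
    have hwbox := hbox w (fun i => ⟨by linarith [(hwrange i).1], (hwrange i).2.le⟩) hcdef.symm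
    refine ⟨fun i _ => ⟨by linarith [(hwbox i).1], by linarith [(hwbox i).2]⟩, ?_, hcdef.symm⟩
    intro i j hij
    have := hwgap i j hij
    linarith
  -- facts about points of D
  have hDbox : ∀ x ∈ D, ∀ i, β ≤ x i ∧ x i ≤ π - β := by
    intro x hx i
    refine hbox x (fun i => ?_) hx.2.2 i
    have h1 := (hx.1 i (Set.mem_univ i)).1
    have h2 := (hx.1 i (Set.mem_univ i)).2
    constructor <;> [linarith; linarith]
  have hDdiff : ∀ x ∈ D, ∀ i j : Fin N, i < j →
      δ ≤ x j - x i ∧ x j - x i ≤ π - 2 * β := by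
    intro x hx i j hij
    have h1 := hx.2.1 i j hij
    have h2 := (hDbox x hx i).1
    have h3 := (hDbox x hx j).2
    constructor <;> linarith
  have hUcont : ContinuousOn (Us m) D := by
    apply continuousOn_finset_sum
    intro j _
    apply continuousOn_finset_sum
    intro i hi
    have hij : i < j := Finset.mem_Iio.1 hi
    apply ContinuousOn.mul continuousOn_const
    apply ContinuousOn.div
    · exact (Real.continuous_cos.comp
        ((continuous_apply j).sub (continuous_apply i))).continuousOn
    · exact (Real.continuous_sin.comp
        ((continuous_apply j).sub (continuous_apply i))).continuousOn
    · intro x hx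
      have h := hDdiff x hx i j hij
      exact ne_of_gt (Real.sin_pos_of_pos_of_lt_pi (by linarith [h.1])
        (by linarith [h.2, hβpos]))
  obtain ⟨p, hpD, hpmin⟩ := hDcomp.exists_isMinOn ⟨w, hwD⟩ hUcont
  have hpmin' : ∀ x ∈ D, Us m p ≤ Us m x := fun x hx => hpmin hx
  have hUpM : Us m p ≤ M := le_trans (hpmin' w hwD) hMw
  have hpbox := hDbox p hpD
  have hplev : Is m p = c := hpD.2.2
  have hrange : ∀ i, 0 < p i ∧ p i < π := by
    intro i
    have h := hpbox i
    constructor <;> [linarith [h.1]; linarith [h.2]]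
  -- nonnegativity of the interaction terms on D
  have hUterm_nonneg : ∀ x ∈ D, ∀ (j : Fin N), ∀ i ∈ Finset.Iio j,
      0 ≤ m i * m j * (Real.cos (x j - x i) / Real.sin (x j - x i)) := by
    intro x hx j i hi
    have hij := Finset.mem_Iio.1 hi
    have h := hDdiff x hx i j hij
    have hsin : 0 < Real.sin (x j - x i) :=
      Real.sin_pos_of_pos_of_lt_pi (by linarith [h.1]) (by linarith [h.2, hβpos])
    have hcos : 0 ≤ Real.cos (x j - x i) := by
      apply Real.cos_nonneg_of_mem_Icc
      constructor
      · linarith [h.1, hδpos]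
      · linarith [h.2, hβ4]
    exact mul_nonneg (mul_nonneg (hm i).le (hm j).le) (div_nonneg hcos hsin.le)
  -- strict gaps at the minimizer
  have hgaps : ∀ i j : Fin N, i < j → p i + δ < p j := by
    intro i j hij
    rcases lt_or_eq_of_le (hpD.2.1 i j hij) with h | h
    · exact h
    exfalso
    have hd : p j - p i = δ := by linarith
    have hterm : μ ^ 2 * (1 / (2 * δ))
        ≤ m i * m j * (Real.cos (p j - p i) / Real.sin (p j - p i)) := by
      rw [hd]
      have hμμ : μ ^ 2 ≤ m i * m j := by
        have h1 := hμle i; have h2 := hμle j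
        nlinarith
      have hcot_nonneg : 0 ≤ Real.cos δ / Real.sin δ := le_trans (by positivity) hcotδ
      calc μ ^ 2 * (1 / (2 * δ)) ≤ μ ^ 2 * (Real.cos δ / Real.sin δ) :=
            mul_le_mul_of_nonneg_left hcotδ (sq_nonneg μ)
        _ ≤ m i * m j * (Real.cos δ / Real.sin δ) :=
            mul_le_mul_of_nonneg_right hμμ hcot_nonneg
    have hinner : m i * m j * (Real.cos (p j - p i) / Real.sin (p j - p i))
        ≤ ∑ i' ∈ Finset.Iio j, m i' * m j * (Real.cos (p j - p i') / Real.sin (p j - p i')) :=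
      Finset.single_le_sum
        (f := fun i' => m i' * m j * (Real.cos (p j - p i') / Real.sin (p j - p i')))
        (fun i' hi' => hUterm_nonneg p hpD j i' hi') (Finset.mem_Iio.2 hij)
    have houter : (∑ i' ∈ Finset.Iio j,
          m i' * m j * (Real.cos (p j - p i') / Real.sin (p j - p i'))) ≤ Us m p :=
      Finset.single_le_sum
        (f := fun j' => ∑ i' ∈ Finset.Iio j',
          m i' * m j' * (Real.cos (p j' - p i') / Real.sin (p j' - p i')))
        (fun j' _ => Finset.sum_nonneg fun i' hi' => hUterm_nonneg p hpD j' i' hi')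
        (Finset.mem_univ j)
    linarith [hδM, hUpM]
  have hporder : ∀ i j : Fin N, i < j → p i < p j := by
    intro i j hij; have := hgaps i j hij; linarith
  -- the local extremum on the level set
  have hVopen : IsOpen {x : Fin N → ℝ | (∀ i, 0 < x i ∧ x i < π) ∧
      ∀ i j : Fin N, i < j → x i + δ < x j} := by
    have h : {x : Fin N → ℝ | (∀ i, 0 < x i ∧ x i < π) ∧
        ∀ i j : Fin N, i < j → x i + δ < x j}
        = (⋂ i, {x : Fin N → ℝ | 0 < x i} ∩ {x : Fin N → ℝ | x i < π}) ∩
          ⋂ (i : Fin N) (j : Fin N), {x : Fin N → ℝ | i < j → x i + δ < x j} := by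
      ext x
      simp only [Set.mem_setOf_eq, Set.mem_inter_iff, Set.mem_iInter]
      try tauto
    rw [h]
    apply IsOpen.inter
    · exact isOpen_iInter_of_finite fun i =>
        (isOpen_lt continuous_const (continuous_apply i)).inter
          (isOpen_lt (continuous_apply i) continuous_const)
    · refine isOpen_iInter_of_finite fun i => isOpen_iInter_of_finite fun j => ?_
      by_cases hij : i < j
      · simp only [hij, true_implies]
        exact isOpen_lt ((continuous_apply i).add continuous_const) (continuous_apply j)
      · simp only [hij, false_implies]
        exact isOpen_univ
  have hpV : p ∈ {x : Fin N → ℝ | (∀ i, 0 < x i ∧ x i < π) ∧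
      ∀ i j : Fin N, i < j → x i + δ < x j} := ⟨hrange, hgaps⟩
  have hextr : IsLocalExtrOn (Us m) {x | Is m x = Is m p} p := by
    left
    show ∀ᶠ x in nhdsWithin p {x | Is m x = Is m p}, Us m p ≤ Us m x
    rw [eventually_nhdsWithin_iff]
    filter_upwards [hVopen.mem_nhds hpV] with x hxV hxS
    have hxlev : Is m x = c := by
      have hxS' : Is m x = Is m p := hxS
      rw [hxS', hplev]
    have hxbox := hbox x (fun i => ⟨(hxV.1 i).1.le, (hxV.1 i).2.le⟩) hxlev
    have hxD : x ∈ D := by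
      refine ⟨fun i _ => ⟨by linarith [(hxbox i).1], by linarith [(hxbox i).2]⟩, ?_, hxlev⟩
      intro i j hij
      exact (hxV.2 i j hij).le
    exact hpmin' x hxD
  -- derivatives
  have hsin_ne : ∀ (j : Fin N), ∀ i ∈ Finset.Iio j, Real.sin (p j - p i) ≠ 0 := by
    intro j i hi
    have h := hDdiff p hpD i j (Finset.mem_Iio.1 hi)
    exact ne_of_gt (Real.sin_pos_of_pos_of_lt_pi (by linarith [h.1])
      (by linarith [h.2, hβpos]))
  have hU' : HasStrictFDerivAt (Us m)
      (∑ j, ∑ i ∈ Finset.Iio j,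
        (m i * m j * (-(1 / Real.sin (p j - p i) ^ 2))) •
          (proj j - proj i : (Fin N → ℝ) →L[ℝ] ℝ)) p :=
    hasStrictFDerivAt_pairSum (g := fun u => Real.cos u / Real.sin u)
      (g' := fun u => -(1 / Real.sin u ^ 2)) m
      (fun j i hi => hasStrictDerivAt_cot (hsin_ne j i hi))
  have hI' : HasStrictFDerivAt (Is m)
      (∑ i, (m i * (-(2 * Real.cos (p i) * Real.sin (p i)))) •
        (proj i : (Fin N → ℝ) →L[ℝ] ℝ)) p := by
    apply hasStrictFDerivAt_diagSum (h := fun u => Real.cos u ^ 2)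
      (h' := fun u => -(2 * Real.cos u * Real.sin u)) m
    intro i
    have h := (Real.hasStrictDerivAt_cos (p i)).mul (Real.hasStrictDerivAt_cos (p i))
    have h2 : (fun u : ℝ => Real.cos u ^ 2) = fun u => Real.cos u * Real.cos u := by
      funext u; ring
    rw [h2]
    refine h.congr_deriv ?_
    ring
  obtain ⟨a, b, hab, hsum0⟩ := hextr.exists_multipliers_of_hasStrictFDerivAt_1d hI' hU'
  have hb : b ≠ 0 := by
    intro hb0
    have ha : a ≠ 0 := by
      intro ha0
      exact hab (by rw [ha0, hb0]; rfl)
    rw [hb0, zero_smul, add_zero] at hsum0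
    have hDI0 := (smul_eq_zero.1 hsum0).resolve_left ha
    have hk : ∀ k : Fin N, p k = π / 2 := by
      intro k
      have hev := congrArg (fun L : (Fin N → ℝ) →L[ℝ] ℝ => L (Pi.single k 1)) hDI0
      simp only [ContinuousLinearMap.zero_apply] at hev
      rw [diagDeriv_apply] at hev
      have hsk : 0 < Real.sin (p k) :=
        Real.sin_pos_of_pos_of_lt_pi (hrange k).1 (hrange k).2
      have hck : Real.cos (p k) = 0 := by
        rcases mul_eq_zero.1 hev with h | h
        · exact absurd h (hm k).ne'
        · nlinarith
      have hm1 : p k ∈ Set.Icc 0 π := Set.mem_Icc.2 ⟨(hrange k).1.le, (hrange k).2.le⟩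
      have hm2 : π / 2 ∈ Set.Icc (0:ℝ) π := Set.mem_Icc.2 ⟨by linarith, by linarith⟩
      exact Real.injOn_cos hm1 hm2 (by rw [Real.cos_pi_div_two, hck])
    have hk0 : (⟨0, by omega⟩ : Fin N) < ⟨1, by omega⟩ := by
      rw [Fin.lt_def]; norm_num
    have := hporder _ _ hk0
    rw [hk ⟨0, by omega⟩, hk ⟨1, by omega⟩] at this
    exact lt_irrefl _ this
  -- the conclusion
  refine ⟨p, -(a / b), hrange, hporder, fun k => ?_⟩
  have hevk := congrArg (fun L : (Fin N → ℝ) →L[ℝ] ℝ => L (Pi.single k 1)) hsum0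
  simp only [ContinuousLinearMap.add_apply, ContinuousLinearMap.coe_smul',
    Pi.smul_apply, ContinuousLinearMap.zero_apply, smul_eq_mul] at hevk
  rw [pairDeriv_apply, diagDeriv_apply] at hevk
  have hIio : ∀ i ∈ Finset.Iio k,
      m k * m i / |Real.sin (p i - p k)| ^ 3 * Real.sin (p i - p k)
        = m i * m k * (-(1 / Real.sin (p k - p i) ^ 2)) := by
    intro i hi
    have hik : i < k := Finset.mem_Iio.1 hi
    have h := hDdiff p hpD i k hik
    have hneg : Real.sin (p i - p k) < 0 := by
      apply Real.sin_neg_of_neg_of_neg_pi_lt (by linarith [h.1])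
      have := (hrange i).1; have := (hrange k).2
      linarith
    have h1 : Real.sin (p k - p i) = -Real.sin (p i - p k) := by
      rw [show p k - p i = -(p i - p k) by ring, Real.sin_neg]
    rw [h1, aux_neg hneg]
    ring
  have hIoi : ∀ j ∈ Finset.Ioi k,
      m k * m j / |Real.sin (p j - p k)| ^ 3 * Real.sin (p j - p k)
        = -(m k * m j * (-(1 / Real.sin (p j - p k) ^ 2))) := by
    intro j hj
    have hkj : k < j := Finset.mem_Ioi.1 hj
    have h := hDdiff p hpD k j hkj
    have hpos : 0 < Real.sin (p j - p k) :=
      Real.sin_pos_of_pos_of_lt_pi (by linarith [h.1]) (by linarith [h.2, hβpos])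
    rw [aux_pos hpos]
    ring
  calc (∑ j ∈ Finset.univ.erase k,
        m k * m j / |Real.sin (p j - p k)| ^ 3 * Real.sin (p j - p k))
      = (∑ j ∈ Finset.Iio k,
          m k * m j / |Real.sin (p j - p k)| ^ 3 * Real.sin (p j - p k))
        + ∑ j ∈ Finset.Ioi k,
            m k * m j / |Real.sin (p j - p k)| ^ 3 * Real.sin (p j - p k) :=
        erase_split k _
    _ = (∑ i ∈ Finset.Iio k, m i * m k * (-(1 / Real.sin (p k - p i) ^ 2)))
        + ∑ j ∈ Finset.Ioi k, -(m k * m j * (-(1 / Real.sin (p j - p k) ^ 2))) := by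
        rw [Finset.sum_congr rfl hIio, Finset.sum_congr rfl hIoi]
    _ = (∑ i ∈ Finset.Iio k, m i * m k * (-(1 / Real.sin (p k - p i) ^ 2)))
        - ∑ j ∈ Finset.Ioi k, m k * m j * (-(1 / Real.sin (p j - p k) ^ 2)) := by
        rw [Finset.sum_neg_distrib]; ring
    _ = -(a / b) * (-2 * m k * Real.cos (p k) * Real.sin (p k)) := by
        apply mul_left_cancel₀ hb
        have e2 : b * (-(a / b) * (-2 * m k * Real.cos (p k) * Real.sin (p k)))
            = -a * (-2 * m k * Real.cos (p k) * Real.sin (p k)) := by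
          field_simp
        rw [e2]
        linear_combination hevk
/-! ### Spherical reconstruction -/


variable {N : ℕ}

def qS (θ : Fin N → ℝ) (i : Fin N) : V4 := ![Real.cos (θ i), 0, Real.sin (θ i), 0]
def tS (θ : Fin N → ℝ) (i : Fin N) : V4 := ![-Real.sin (θ i), 0, Real.cos (θ i), 0]

lemma abs_sub_lt_pi {θ : Fin N → ℝ} (hr : ∀ i, 0 < θ i ∧ θ i < π) (i j : Fin N) :
    |θ i - θ j| < π := by
  rcases hr i with ⟨h1, h2⟩; rcases hr j with ⟨h3, h4⟩
  rw [abs_sub_lt_iff]; constructor <;> linarith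

lemma dS_qS {θ : Fin N → ℝ} (hr : ∀ i, 0 < θ i ∧ θ i < π) (i j : Fin N) :
    dS (qS θ i) (qS θ j) = |θ i - θ j| := by
  have h : dot4 (qS θ i) (qS θ j) = Real.cos (θ i - θ j) := by
    simp [dot4, qS, Real.cos_sub]; try ring
  rw [dS, h, ← Real.cos_abs (θ i - θ j)]
  exact Real.arccos_cos (abs_nonneg _) (abs_sub_lt_pi hr i j).le

lemma cos_dS_qS {θ : Fin N → ℝ} (hr : ∀ i, 0 < θ i ∧ θ i < π) (i j : Fin N) :
    Real.cos (dS (qS θ i) (qS θ j)) = Real.cos (θ i - θ j) := by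
  rw [dS_qS hr, Real.cos_abs]

lemma sin_dS_qS {θ : Fin N → ℝ} (hr : ∀ i, 0 < θ i ∧ θ i < π) (i j : Fin N) :
    Real.sin (dS (qS θ i) (qS θ j)) = |Real.sin (θ j - θ i)| := by
  rw [dS_qS hr]
  rcases le_or_gt (θ i) (θ j) with h | h
  · rw [abs_sub_comm, abs_of_nonneg (by linarith : (0:ℝ) ≤ θ j - θ i),
      abs_of_nonneg (Real.sin_nonneg_of_nonneg_of_le_pi (by linarith)
        (by have := abs_sub_lt_pi hr j i; rw [abs_sub_lt_iff] at this; linarith))]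
  · have h1 : θ i - θ j ≤ π := by have := abs_sub_lt_pi hr i j; rw [abs_sub_lt_iff] at this; linarith
    rw [abs_of_nonneg (by linarith : (0:ℝ) ≤ θ i - θ j)]
    rw [show θ j - θ i = -(θ i - θ j) by ring, Real.sin_neg,
      abs_neg, abs_of_nonneg (Real.sin_nonneg_of_nonneg_of_le_pi (by linarith) h1)]

lemma vec_key_S {θ : Fin N → ℝ} (hr : ∀ i, 0 < θ i ∧ θ i < π) (k j : Fin N) :
    qS θ j - Real.cos (dS (qS θ k) (qS θ j)) • qS θ k
      = Real.sin (θ j - θ k) • tS θ k := by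
  rw [cos_dS_qS hr]
  funext x
  fin_cases x <;>
    simp [qS, tS, Pi.sub_apply, Pi.smul_apply, smul_eq_mul, Real.cos_sub, Real.sin_sub]
  · linear_combination (-Real.cos (θ j)) * (Real.sin_sq_add_cos_sq (θ k))
  · linear_combination (-Real.sin (θ j)) * (Real.sin_sq_add_cos_sq (θ k))

lemma gradUS_qS {θ : Fin N → ℝ} (m : Fin N → ℝ) (hr : ∀ i, 0 < θ i ∧ θ i < π) (k : Fin N) :
    gradUS m (qS θ) k
      = (∑ j ∈ Finset.univ.erase k,
          m k * m j / |Real.sin (θ j - θ k)| ^ 3 * Real.sin (θ j - θ k)) • tS θ k := by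
  rw [gradUS, Finset.sum_smul]
  refine Finset.sum_congr rfl fun j hj => ?_
  rw [vec_key_S hr, sin_dS_qS hr, smul_smul]

lemma gradIS_qS {θ : Fin N → ℝ} (m : Fin N → ℝ) (k : Fin N) :
    gradIS m (qS θ) k = (-2 * m k * Real.cos (θ k) * Real.sin (θ k)) • tS θ k := by
  funext x
  fin_cases x <;> simp [gradIS, qS, tS, Pi.smul_apply, smul_eq_mul] <;> try ring

/-! ### Hyperbolic reconstruction -/

def qH (s : Fin N → ℝ) (i : Fin N) : V4 := ![Real.sinh (s i), 0, 0, Real.cosh (s i)]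
def tH (s : Fin N → ℝ) (i : Fin N) : V4 := ![Real.cosh (s i), 0, 0, Real.sinh (s i)]

lemma sinh_abs' (a : ℝ) : Real.sinh |a| = |Real.sinh a| := by
  rcases le_or_gt 0 a with h | h
  · rw [abs_of_nonneg h, abs_of_nonneg]
    rw [← Real.sinh_zero]
    exact Real.sinh_le_sinh.2 h
  · rw [abs_of_neg h, abs_of_neg, Real.sinh_neg]
    rw [← Real.sinh_zero]
    exact Real.sinh_lt_sinh.2 h

lemma arcosh_cosh (a : ℝ) : _root_.arcosh (Real.cosh a) = |a| := by
  rw [_root_.arcosh, show Real.cosh a ^ 2 - 1 = Real.sinh a ^ 2 by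
      have := Real.cosh_sq_sub_sinh_sq a; nlinarith]
  rw [Real.sqrt_sq_eq_abs, ← Real.cosh_abs a, ← sinh_abs' a,
    Real.cosh_add_sinh, Real.log_exp]

lemma dH_qH {s : Fin N → ℝ} (i j : Fin N) : dH (qH s i) (qH s j) = |s i - s j| := by
  have h : -(mdot4 (qH s i) (qH s j)) = Real.cosh (s i - s j) := by
    simp [mdot4, qH, Real.cosh_sub]; try ring
  rw [dH, h, arcosh_cosh]

lemma cosh_dH_qH {s : Fin N → ℝ} (i j : Fin N) :
    Real.cosh (dH (qH s i) (qH s j)) = Real.cosh (s i - s j) := by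
  rw [dH_qH, Real.cosh_abs]

lemma sinh_dH_qH {s : Fin N → ℝ} (i j : Fin N) :
    Real.sinh (dH (qH s i) (qH s j)) = |Real.sinh (s j - s i)| := by
  rw [dH_qH, abs_sub_comm, sinh_abs']

lemma vec_key_H {s : Fin N → ℝ} (k j : Fin N) :
    qH s j - Real.cosh (dH (qH s k) (qH s j)) • qH s k
      = Real.sinh (s j - s k) • tH s k := by
  rw [cosh_dH_qH]
  funext x
  fin_cases x <;>
    simp [qH, tH, Pi.sub_apply, Pi.smul_apply, smul_eq_mul, Real.cosh_sub, Real.sinh_sub]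
  · linear_combination (-Real.sinh (s j)) * (Real.cosh_sq_sub_sinh_sq (s k))
  · linear_combination (-Real.cosh (s j)) * (Real.cosh_sq_sub_sinh_sq (s k))

lemma gradUH_qH {s : Fin N → ℝ} (m : Fin N → ℝ) (k : Fin N) :
    gradUH m (qH s) k
      = (∑ j ∈ Finset.univ.erase k,
          m k * m j / |Real.sinh (s j - s k)| ^ 3 * Real.sinh (s j - s k)) • tH s k := by
  rw [gradUH, Finset.sum_smul]
  refine Finset.sum_congr rfl fun j hj => ?_
  rw [vec_key_H, sinh_dH_qH, smul_smul]

lemma gradIH_qH {s : Fin N → ℝ} (m : Fin N → ℝ) (k : Fin N) :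
    gradIH m (qH s) k = (2 * m k * Real.sinh (s k) * Real.cosh (s k)) • tH s k := by
  funext x
  fin_cases x <;> simp [gradIH, qH, tH, Pi.smul_apply, smul_eq_mul] <;> try ring

end S13

/-- Existence of ordinary central configurations in `S³` and of
central configurations in `H³` for any given masses. -/
theorem statement13 (N : ℕ) (hN : 2 ≤ N) (m : Fin N → ℝ) (hm : ∀ i, 0 < m i) :
    (∃ (q : Fin N → V4) (lam : ℝ), (∀ i, q i ∈ sphere3) ∧
      (∀ i j, i ≠ j → q i ≠ q j ∧ q i ≠ -q j) ∧
      (∀ i, gradUS m q i = lam • gradIS m q i) ∧ (∃ i, gradUS m q i ≠ 0)) ∧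
    (∃ (q : Fin N → V4) (lam : ℝ), (∀ i, q i ∈ hyper3) ∧
      (∀ i j, i ≠ j → q i ≠ q j) ∧
      (∀ i, gradUH m q i = lam • gradIH m q i)) := by
  constructor
  · obtain ⟨θ, lam, hr, hmono, heq⟩ := S13.sph_angles N hN m hm
    refine ⟨S13.qS θ, lam, fun i => ?_, fun i j hij => ⟨?_, ?_⟩, fun k => ?_, ?_⟩
    · show _ = 1
      simp [S13.qS]
      try linear_combination Real.sin_sq_add_cos_sq (θ i)
    · -- q i ≠ q j
      intro h
      have h0 := congrFun h 0
      simp [S13.qS] at h0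
      have hθ : θ i = θ j := Real.injOn_cos ⟨(hr i).1.le, (hr i).2.le⟩
        ⟨(hr j).1.le, (hr j).2.le⟩ h0
      rcases hij.lt_or_gt with h' | h'
      · exact (hmono _ _ h').ne hθ
      · exact (hmono _ _ h').ne' hθ
    · -- q i ≠ -q j
      intro h
      have h2 := congrFun h 2
      simp [S13.qS] at h2
      have hi := Real.sin_pos_of_pos_of_lt_pi (hr i).1 (hr i).2
      have hj := Real.sin_pos_of_pos_of_lt_pi (hr j).1 (hr j).2
      linarith [h2]
    · rw [S13.gradUS_qS m hr, S13.gradIS_qS m, heq k, smul_smul]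
    · -- nonvanishing at top index
      have hk0 : N - 1 < N := by omega
      refine ⟨⟨N - 1, hk0⟩, ?_⟩
      set k0 : Fin N := ⟨N - 1, hk0⟩ with hk0def
      rw [S13.gradUS_qS m hr]
      have hsum : (∑ j ∈ Finset.univ.erase k0,
          m k0 * m j / |Real.sin (θ j - θ k0)| ^ 3 * Real.sin (θ j - θ k0)) < 0 := by
        refine Finset.sum_neg (fun j hj => ?_) ?_
        · have hjk : j < k0 := by
            rcases Finset.mem_erase.1 hj with ⟨hne, -⟩
            have : (j : ℕ) ≠ N - 1 := fun hc => hne (Fin.ext hc)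
            exact Fin.mk_lt_mk.2 (by omega) |>.trans_le (le_refl _) |>.trans_le (le_refl _)
          have hlt : θ j < θ k0 := hmono _ _ hjk
          have hgtpi : -π < θ j - θ k0 := by
            have := (hr j).1; have := (hr k0).2; linarith
          have hsin : Real.sin (θ j - θ k0) < 0 :=
            Real.sin_neg_of_neg_of_neg_pi_lt (by linarith) hgtpi
          have habs : 0 < |Real.sin (θ j - θ k0)| ^ 3 := pow_pos (abs_pos.2 hsin.ne) 3
          have hmm : 0 < m k0 * m j := mul_pos (hm _) (hm _)
          have : 0 < m k0 * m j / |Real.sin (θ j - θ k0)| ^ 3 := div_pos hmm habs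
          exact mul_neg_of_pos_of_neg this hsin
        · refine ⟨⟨0, by omega⟩, Finset.mem_erase.2 ⟨?_, Finset.mem_univ _⟩⟩
          intro hc
          have := congrArg Fin.val hc
          simp at this
          have h1 : (k0 : ℕ) = N - 1 := rfl
          omega
      intro hzero
      have h0 := congrFun hzero 0
      rw [Pi.smul_apply, smul_eq_mul] at h0
      simp only [S13.tS, Matrix.cons_val_zero, Pi.zero_apply] at h0
      have hs := Real.sin_pos_of_pos_of_lt_pi (hr k0).1 (hr k0).2
      exact (mul_ne_zero hsum.ne (neg_ne_zero.2 hs.ne')) h0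
  · obtain ⟨s, hmono, heq⟩ := S13.hyp_points N hN m hm
    refine ⟨S13.qH s, -1, fun i => ⟨?_, ?_⟩, fun i j hij => ?_, fun k => ?_⟩
    · show _ = -1
      simp [S13.qH]
      try linear_combination - Real.cosh_sq_sub_sinh_sq (s i)
    · show (0:ℝ) < _
      simp [S13.qH]
      exact Real.cosh_pos _
    · intro h
      have h0 := congrFun h 0
      simp only [S13.qH, Matrix.cons_val_zero] at h0
      have hss := Real.sinh_injective h0
      rcases Ne.lt_or_gt hij with h' | h'
      · exact absurd hss (ne_of_lt (hmono _ _ h'))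
      · exact absurd hss.symm (ne_of_lt (hmono _ _ h'))
    · rw [S13.gradUH_qH m, S13.gradIH_qH m, heq k, smul_smul]
      norm_num
end
end

section
/- Let N ≥ 2, m₁,…,m_N > 0, and c > 0. Then there exists exactly one tuple (θ₁,…,θ_N) ∈ ℝ^N with θ₁ < θ₂ < ⋯ < θ_N such that Σᵢ mᵢ sinh²θᵢ = c and there exists λ ∈ ℝ with Σ_{j≠i} mᵢmⱼ · sgn(θⱼ−θᵢ)/sinh²(θᵢ−θⱼ) = λ mᵢ sinh(2θᵢ) for every i = 1,…,N. (Consequently, for each c > 0 and each of the N! orderings of the masses along the geodesic there is exactly one geodesic central configuration with I = c, giving exactly N!/2 geodesic central configurations up to the rotation identifying reversed orderings.) -/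
noncomputable section
open Real Finset

namespace St14

/-- hyperbolic cotangent -/
def coth (x : ℝ) : ℝ := Real.cosh x / Real.sinh x

lemma coth_sub {x y : ℝ} (hx : x ≠ 0) (hy : y ≠ 0) :
    coth x - coth y = Real.sinh (y - x) / (Real.sinh x * Real.sinh y) := by
  rw [coth, coth, div_sub_div _ _ (Real.sinh_ne_zero.2 hx) (Real.sinh_ne_zero.2 hy),
    Real.sinh_sub]
  ring_nf

lemma coth_antitone {x y : ℝ} (hx : 0 < x) (hxy : x ≤ y) : coth y ≤ coth x := by
  have hy : 0 < y := hx.trans_le hxy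
  have h := coth_sub hx.ne' hy.ne'
  have : 0 ≤ Real.sinh (y - x) / (Real.sinh x * Real.sinh y) := by
    apply div_nonneg (Real.sinh_nonneg_iff.2 (by linarith))
    positivity
  linarith [h ▸ this]

lemma one_le_coth {x : ℝ} (hx : 0 < x) : 1 ≤ coth x := by
  rw [coth, le_div_iff₀ (Real.sinh_pos_iff.2 hx), one_mul]
  nlinarith [Real.cosh_sub_sinh x, Real.exp_pos (-x)]

lemma coth_pos {x : ℝ} (hx : 0 < x) : 0 < coth x := lt_of_lt_of_le one_pos (one_le_coth hx)

lemma inv_sinh_le_coth {x : ℝ} (hx : 0 < x) : 1 / Real.sinh x ≤ coth x := by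
  rw [coth, div_le_div_iff_of_pos_right (Real.sinh_pos_iff.2 hx)]
  exact Real.one_le_cosh x

lemma hasStrictDerivAt_coth {x : ℝ} (hx : x ≠ 0) :
    HasStrictDerivAt coth (-(1 / Real.sinh x ^ 2)) x := by
  have h : HasStrictDerivAt coth _ x := (Real.hasStrictDerivAt_cosh x).div (Real.hasStrictDerivAt_sinh x)
    (Real.sinh_ne_zero.2 hx)
  convert h using 1
  have := Real.cosh_sq_sub_sinh_sq x
  field_simp
  nlinarith [this]

lemma hasDerivAt_coth {x : ℝ} (hx : x ≠ 0) :
    HasDerivAt coth (-(1 / Real.sinh x ^ 2)) x := (hasStrictDerivAt_coth hx).hasDerivAt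

/-- second derivative computation helper -/
lemma hasDerivAt_negInvSinhSq {x : ℝ} (hx : x ≠ 0) :
    HasDerivAt (fun y => -(1 / Real.sinh y ^ 2)) (2 * Real.cosh x / Real.sinh x ^ 3) x := by
  have hs := Real.sinh_ne_zero.2 hx
  have h1 : HasDerivAt (fun y => Real.sinh y ^ 2) (2 * Real.sinh x * Real.cosh x) x := by
    simpa [mul_comm] using ((Real.hasDerivAt_sinh x).fun_pow 2)
  have h2 : HasDerivAt (fun y => -(Real.sinh y ^ 2)⁻¹) _ x := (h1.inv (by positivity)).neg
  simp only [one_div]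
  convert h2 using 1
  rw [neg_div, neg_neg, div_eq_div_iff (pow_ne_zero 3 hs) (pow_ne_zero 2 (pow_ne_zero 2 hs))]
  ring

lemma convexOn_coth : ConvexOn ℝ (Set.Ioi (0:ℝ)) coth := by
  have hD : Convex ℝ (Set.Ioi (0:ℝ)) := convex_Ioi 0
  have hderiv : ∀ x ∈ Set.Ioi (0:ℝ), deriv coth x = -(1 / Real.sinh x ^ 2) := fun x hx =>
    (hasDerivAt_coth (ne_of_gt hx)).deriv
  apply convexOn_of_deriv2_nonneg hD
  · intro x hx
    exact (hasDerivAt_coth (ne_of_gt hx)).continuousAt.continuousWithinAt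
  · intro x hx
    rw [interior_Ioi] at hx
    exact (hasDerivAt_coth (ne_of_gt hx)).differentiableAt.differentiableWithinAt
  · intro x hx
    rw [interior_Ioi] at hx
    have : deriv coth =ᶠ[nhds x] (fun y => -(1 / Real.sinh y ^ 2)) := by
      filter_upwards [eventually_gt_nhds hx] with y hy
      exact (hasDerivAt_coth (ne_of_gt hy)).deriv
    apply DifferentiableAt.differentiableWithinAt
    exact (hasDerivAt_negInvSinhSq (ne_of_gt hx)).differentiableAt.congr_of_eventuallyEq this
  · intro x hx
    rw [interior_Ioi] at hx
    have hev : deriv coth =ᶠ[nhds x] (fun y => -(1 / Real.sinh y ^ 2)) := by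
      filter_upwards [eventually_gt_nhds hx] with y hy
      exact (hasDerivAt_coth (ne_of_gt hy)).deriv
    have : deriv (deriv coth) x = 2 * Real.cosh x / Real.sinh x ^ 3 := by
      rw [hev.deriv_eq]
      exact (hasDerivAt_negInvSinhSq (ne_of_gt hx)).deriv
    rw [show deriv^[2] coth = deriv (deriv coth) from rfl, this]
    have := Real.cosh_pos x
    have : (0:ℝ) < Real.sinh x := Real.sinh_pos_iff.2 hx
    positivity

lemma strictConvexOn_sinhsq : StrictConvexOn ℝ Set.univ (fun x : ℝ => Real.sinh x ^ 2) := by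
  have h1 : deriv (fun x : ℝ => Real.sinh x ^ 2) = fun x => 2 * Real.sinh x * Real.cosh x := by
    funext x
    simpa [mul_comm] using ((Real.hasDerivAt_sinh x).pow 2).deriv
  apply strictConvexOn_of_deriv2_pos convex_univ
  · exact (Real.continuous_sinh.pow 2).continuousOn
  · intro x _
    have h2 : deriv (deriv fun x : ℝ => Real.sinh x ^ 2) x
        = 2 * (Real.cosh x ^ 2 + Real.sinh x ^ 2) := by
      rw [h1]
      have : HasDerivAt (fun x => 2 * Real.sinh x * Real.cosh x)
          (2 * (Real.cosh x ^ 2 + Real.sinh x ^ 2)) x := by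
        have : HasDerivAt (fun x => 2 * Real.sinh x * Real.cosh x) _ x :=
          ((Real.hasDerivAt_sinh x).const_mul 2).mul (Real.hasDerivAt_cosh x)
        convert this using 1
        ring
      exact this.deriv
    rw [show deriv^[2] _ = deriv (deriv fun x : ℝ => Real.sinh x ^ 2) from rfl, h2]
    nlinarith [Real.cosh_pos x, sq_nonneg (Real.sinh x)]


variable {N : ℕ}

/-- force function on the ordered region -/
def Ufun (m : Fin N → ℝ) (θ : Fin N → ℝ) : ℝ :=
  ∑ i, ∑ j ∈ Finset.Ioi i, m i * m j * coth (θ j - θ i)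

/-- moment of inertia -/
def Ifun (m : Fin N → ℝ) (θ : Fin N → ℝ) : ℝ := ∑ i, m i * Real.sinh (θ i) ^ 2

/-- ordered region -/
def Omeg (N : ℕ) : Set (Fin N → ℝ) := {θ | StrictMono θ}

/-- gradient coordinates of U (as in the theorem statement) -/
def gU (m θ : Fin N → ℝ) (i : Fin N) : ℝ :=
  ∑ j ∈ Finset.univ.erase i, m i * m j * Real.sign (θ j - θ i) / Real.sinh (θ i - θ j) ^ 2

/-- gradient coordinates of I -/
def gI (m θ : Fin N → ℝ) (i : Fin N) : ℝ := m i * Real.sinh (2 * θ i)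

/-- projection as CLM -/
def projL (i : Fin N) : (Fin N → ℝ) →L[ℝ] ℝ := ContinuousLinearMap.proj i

lemma projL_apply (i : Fin N) (v : Fin N → ℝ) : projL i v = v i := rfl

/-- the continuous linear map v ↦ ∑ c i * v i -/
def Dc (c : Fin N → ℝ) : (Fin N → ℝ) →L[ℝ] ℝ := ∑ i, c i • projL i

lemma Dc_apply (c v : Fin N → ℝ) : Dc c v = ∑ i, c i * v i := by
  simp [Dc, projL]

lemma convex_Omeg : Convex ℝ (Omeg N) := by
  intro x hx y hy a b ha hb hab
  intro i j hij
  simp only [Pi.add_apply, Pi.smul_apply, smul_eq_mul]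
  rcases eq_or_lt_of_le ha with rfl | ha'
  · simp only [zero_mul, zero_add] at *
    have hb1 : b = 1 := by linarith
    simpa [hb1] using hy hij
  · have h1 : a * x i < a * x j := by exact (mul_lt_mul_iff_right₀ ha').2 (hx hij)
    have h2 : b * y i ≤ b * y j := mul_le_mul_of_nonneg_left (hy hij).le hb
    linarith

lemma sinh_sq_sub (θ : Fin N → ℝ) (i j : Fin N) :
    Real.sinh (θ i - θ j) ^ 2 = Real.sinh (θ j - θ i) ^ 2 := by
  rw [show θ i - θ j = -(θ j - θ i) by ring, Real.sinh_neg]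
  ring

lemma erase_eq_Iio_union_Ioi (i : Fin N) :
    Finset.univ.erase i = Finset.Iio i ∪ Finset.Ioi i := by
  ext j
  simp only [Finset.mem_erase, Finset.mem_univ, and_true, Finset.mem_union, Finset.mem_Iio,
    Finset.mem_Ioi]
  constructor
  · exact fun h => h.lt_or_gt
  · rintro (h | h)
    exacts [h.ne, h.ne']

lemma gU_eq {m θ : Fin N → ℝ} (hθ : StrictMono θ) (i : Fin N) :
    gU m θ i = (∑ j ∈ Finset.Ioi i, m i * m j / Real.sinh (θ j - θ i) ^ 2)
      - ∑ j ∈ Finset.Iio i, m i * m j / Real.sinh (θ i - θ j) ^ 2 := by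
  rw [gU, erase_eq_Iio_union_Ioi, Finset.sum_union]
  · have h1 : ∀ j ∈ Finset.Iio i,
        m i * m j * Real.sign (θ j - θ i) / Real.sinh (θ i - θ j) ^ 2
          = -(m i * m j / Real.sinh (θ i - θ j) ^ 2) := by
      intro j hj
      rw [Finset.mem_Iio] at hj
      rw [Real.sign_of_neg (by have := hθ hj; linarith)]
      ring
    have h2 : ∀ j ∈ Finset.Ioi i,
        m i * m j * Real.sign (θ j - θ i) / Real.sinh (θ i - θ j) ^ 2
          = m i * m j / Real.sinh (θ j - θ i) ^ 2 := by
      intro j hj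
      rw [Finset.mem_Ioi] at hj
      rw [Real.sign_of_pos (by have := hθ hj; linarith), sinh_sq_sub]
      ring
    rw [Finset.sum_congr rfl h1, Finset.sum_congr rfl h2, Finset.sum_neg_distrib]
    ring
  · rw [Finset.disjoint_left]
    intro j hj hj2
    rw [Finset.mem_Iio] at hj
    rw [Finset.mem_Ioi] at hj2
    exact absurd (hj.trans hj2) (lt_irrefl j)


lemma sum_Ioi_swap (F : Fin N → Fin N → ℝ) :
    ∑ i, ∑ j ∈ Finset.Ioi i, F i j = ∑ j, ∑ i ∈ Finset.Iio j, F i j := by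
  rw [Finset.sum_sigma', Finset.sum_sigma']
  refine Finset.sum_nbij' (fun p => ⟨p.2, p.1⟩) (fun p => ⟨p.2, p.1⟩) ?_ ?_ ?_ ?_ ?_ <;> simp

lemma hasStrictFDerivAt_Ifun (m : Fin N → ℝ) (θ : Fin N → ℝ) :
    HasStrictFDerivAt (Ifun m) (Dc (gI m θ)) θ := by
  have h : ∀ i ∈ Finset.univ (α := Fin N), HasStrictFDerivAt
      (fun σ : Fin N → ℝ => m i * Real.sinh (σ i) ^ 2)
      (gI m θ i • projL i) θ := by
    intro i _
    have houter : HasStrictDerivAt (fun x : ℝ => m i * Real.sinh x ^ 2)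
        (gI m θ i) (θ i) := by
      have : HasStrictDerivAt (fun x : ℝ => m i * Real.sinh x ^ 2) _ (θ i) := ((hasStrictDerivAt_pow 2 (Real.sinh (θ i))).comp (θ i)
        (Real.hasStrictDerivAt_sinh (θ i))).const_mul (m i)
      convert this using 1
      rw [gI, Real.sinh_two_mul]
      ring
    have := houter.comp_hasStrictFDerivAt θ (projL i).hasStrictFDerivAt
    exact this
  exact HasStrictFDerivAt.fun_sum h

lemma hasStrictFDerivAt_Ufun (m : Fin N → ℝ) {θ : Fin N → ℝ} (hθ : StrictMono θ) :
    HasStrictFDerivAt (Ufun m) (Dc (gU m θ)) θ := by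
  classical
  -- derivative of each pair term
  have hterm : ∀ i, ∀ j ∈ Finset.Ioi i, HasStrictFDerivAt
      (fun σ : Fin N → ℝ => m i * m j * coth (σ j - σ i))
      ((m i * m j * -(1 / Real.sinh (θ j - θ i) ^ 2)) • (projL j - projL i)) θ := by
    intro i j hj
    rw [Finset.mem_Ioi] at hj
    have hpos : 0 < θ j - θ i := by have := hθ hj; linarith
    have hL : HasStrictFDerivAt (fun σ : Fin N → ℝ => σ j - σ i)
        (projL j - projL i) θ :=
      ((projL (N := N) j).hasStrictFDerivAt).sub ((projL (N := N) i).hasStrictFDerivAt)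
    have houter := hasStrictDerivAt_coth (ne_of_gt hpos)
    have hcomp := houter.comp_hasStrictFDerivAt θ hL
    have : HasStrictFDerivAt (fun σ : Fin N → ℝ => m i * m j * coth (σ j - σ i))
        ((m i * m j) • -(1 / Real.sinh (θ j - θ i) ^ 2) • (projL j - projL i)) θ :=
      hcomp.const_mul (m i * m j)
    convert this using 1
    rw [smul_smul]
  have hsum : ∀ i ∈ Finset.univ (α := Fin N), HasStrictFDerivAt
      (fun σ : Fin N → ℝ => ∑ j ∈ Finset.Ioi i, m i * m j * coth (σ j - σ i))
      (∑ j ∈ Finset.Ioi i, (m i * m j * -(1 / Real.sinh (θ j - θ i) ^ 2)) •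
        (projL j - projL i)) θ :=
    fun i _ => HasStrictFDerivAt.fun_sum (hterm i)
  have h : HasStrictFDerivAt (Ufun m) (∑ i, ∑ j ∈ Finset.Ioi i,
      (m i * m j * -(1 / Real.sinh (θ j - θ i) ^ 2)) • (projL j - projL i)) θ :=
    HasStrictFDerivAt.fun_sum hsum
  convert h using 1
  -- identify the two continuous linear maps
  ext v
  simp only [ContinuousLinearMap.coe_sum', Finset.sum_apply, ContinuousLinearMap.coe_smul',
    Pi.smul_apply, ContinuousLinearMap.coe_sub', Pi.sub_apply, projL_apply,
    smul_eq_mul, Dc_apply]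
  -- scalar identity
  have key : ∀ (i : Fin N), gU m θ i * v i
      = (∑ j ∈ Finset.Ioi i, m i * m j / Real.sinh (θ j - θ i) ^ 2 * v i)
        - ∑ j ∈ Finset.Iio i, m i * m j / Real.sinh (θ i - θ j) ^ 2 * v i := by
    intro i
    rw [gU_eq hθ, sub_mul, Finset.sum_mul, Finset.sum_mul]
  calc ∑ i, gU m θ i * v i
      = ∑ i, ((∑ j ∈ Finset.Ioi i, m i * m j / Real.sinh (θ j - θ i) ^ 2 * v i)
        - ∑ j ∈ Finset.Iio i, m i * m j / Real.sinh (θ i - θ j) ^ 2 * v i) := by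
        exact Finset.sum_congr rfl (fun i _ => key i)
    _ = (∑ i, ∑ j ∈ Finset.Ioi i, m i * m j / Real.sinh (θ j - θ i) ^ 2 * v i)
        - ∑ i, ∑ j ∈ Finset.Iio i, m i * m j / Real.sinh (θ i - θ j) ^ 2 * v i := by
        rw [Finset.sum_sub_distrib]
    _ = (∑ i, ∑ j ∈ Finset.Ioi i, m i * m j / Real.sinh (θ j - θ i) ^ 2 * v i)
        - ∑ i, ∑ j ∈ Finset.Ioi i, m i * m j / Real.sinh (θ j - θ i) ^ 2 * v j := by
        congr 1
        rw [sum_Ioi_swap (fun i j => m i * m j / Real.sinh (θ j - θ i) ^ 2 * v j)]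
        apply Finset.sum_congr rfl
        intro i _
        apply Finset.sum_congr rfl
        intro j _
        rw [sinh_sq_sub]
        ring
    _ = ∑ i, ∑ j ∈ Finset.Ioi i, m i * m j * -(1 / Real.sinh (θ j - θ i) ^ 2) * (v j - v i) := by
        rw [← Finset.sum_sub_distrib]
        apply Finset.sum_congr rfl
        intro i _
        rw [← Finset.sum_sub_distrib]
        apply Finset.sum_congr rfl
        intro j _
        field_simp
        ring


lemma convexOn_finset_sum {ι : Type*} (t : Finset ι) {s : Set (Fin N → ℝ)}
    (hs : Convex ℝ s) {f : ι → (Fin N → ℝ) → ℝ} (h : ∀ i ∈ t, ConvexOn ℝ s (f i)) :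
    ConvexOn ℝ s (fun x => ∑ i ∈ t, f i x) := by
  classical
  induction t using Finset.induction_on with
  | empty => simpa using convexOn_const 0 hs
  | @insert a t hnotmem ih =>
    simp only [Finset.sum_insert hnotmem]
    exact (h a (Finset.mem_insert_self a t)).add
      (ih (fun i hi => h i (Finset.mem_insert_of_mem hi)))

lemma convexOn_Ufun {m : Fin N → ℝ} (hm : ∀ i, 0 ≤ m i) : ConvexOn ℝ (Omeg N) (Ufun m) := by
  apply convexOn_finset_sum _ convex_Omeg
  intro i _
  apply convexOn_finset_sum _ convex_Omeg
  intro j hj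
  rw [Finset.mem_Ioi] at hj
  have hg : ConvexOn ℝ (Omeg N) (fun θ : Fin N → ℝ => coth (θ j - θ i)) := by
    refine ⟨convex_Omeg, fun x hx y hy a b ha hb hab => ?_⟩
    have hd1 : x j - x i ∈ Set.Ioi (0:ℝ) := Set.mem_Ioi.2 (sub_pos.2 (hx hj))
    have hd2 : y j - y i ∈ Set.Ioi (0:ℝ) := Set.mem_Ioi.2 (sub_pos.2 (hy hj))
    have hcv := convexOn_coth.2 hd1 hd2 ha hb hab
    have harg : (a • x + b • y) j - (a • x + b • y) i
        = a • (x j - x i) + b • (y j - y i) := by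
      simp only [Pi.add_apply, Pi.smul_apply, smul_eq_mul]
      ring
    have goal := hcv
    rw [← harg] at goal
    exact goal
  have := hg.smul (mul_nonneg (hm i) (hm j))
  simpa [smul_eq_mul] using this

/-- multiply a strictly convex function by a positive constant -/
lemma strictConvexOn_const_mul {f : ℝ → ℝ} {c : ℝ} (hc : 0 < c) {s : Set ℝ}
    (hf : StrictConvexOn ℝ s f) : StrictConvexOn ℝ s (fun x => c * f x) := by
  refine ⟨hf.1, fun x hx y hy hxy a b ha hb hab => ?_⟩
  have h := hf.2 hx hy hxy ha hb hab
  simp only [smul_eq_mul] at h ⊢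
  nlinarith

lemma strictConvexOn_pi_sum {f : Fin N → ℝ → ℝ} (hf : ∀ i, StrictConvexOn ℝ Set.univ (f i)) :
    StrictConvexOn ℝ Set.univ (fun θ : Fin N → ℝ => ∑ i, f i (θ i)) := by
  refine ⟨convex_univ, ?_⟩
  intro x _ y _ hxy a b ha hb hab
  simp only [Pi.add_apply, Pi.smul_apply, smul_eq_mul]
  have hle : ∀ i ∈ Finset.univ (α := Fin N),
      f i (a * x i + b * y i) ≤ a * f i (x i) + b * f i (y i) := by
    intro i _
    have := (hf i).convexOn.2 (Set.mem_univ (x i)) (Set.mem_univ (y i)) ha.le hb.le hab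
    simpa using this
  obtain ⟨i0, hi0⟩ : ∃ i, x i ≠ y i := by
    by_contra h
    push_neg at h
    exact hxy (funext h)
  have hlt : f i0 (a * x i0 + b * y i0) < a * f i0 (x i0) + b * f i0 (y i0) := by
    have := (hf i0).2 (Set.mem_univ (x i0)) (Set.mem_univ (y i0)) hi0 ha hb hab
    simpa using this
  calc ∑ i, f i (a * x i + b * y i)
      < ∑ i, (a * f i (x i) + b * f i (y i)) :=
        Finset.sum_lt_sum hle ⟨i0, Finset.mem_univ i0, hlt⟩
    _ = a * ∑ i, f i (x i) + b * ∑ i, f i (y i) := by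
        rw [Finset.sum_add_distrib, Finset.mul_sum, Finset.mul_sum]

lemma strictConvexOn_G {m : Fin N → ℝ} (hm : ∀ i, 0 < m i) {μ : ℝ} (hμ : 0 < μ) :
    StrictConvexOn ℝ (Omeg N) (fun θ => Ufun m θ + μ * Ifun m θ) := by
  have hI : StrictConvexOn ℝ Set.univ (fun θ : Fin N → ℝ => μ * Ifun m θ) := by
    have h := strictConvexOn_pi_sum (f := fun i => fun x => (μ * m i) * Real.sinh x ^ 2)
      (fun i => strictConvexOn_const_mul (mul_pos hμ (hm i)) strictConvexOn_sinhsq)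
    have heq : (fun θ : Fin N → ℝ => μ * Ifun m θ)
        = fun θ : Fin N → ℝ => ∑ i, (μ * m i) * Real.sinh (θ i) ^ 2 := by
      funext θ
      rw [Ifun, Finset.mul_sum]
      exact Finset.sum_congr rfl (fun i _ => by ring)
    rw [heq]
    exact h
  exact (convexOn_Ufun (fun i => (hm i).le)).add_strictConvexOn
    (hI.subset (Set.subset_univ _) convex_Omeg)

lemma isMinOn_of_deriv_zero {s : Set (Fin N → ℝ)} (hs : Convex ℝ s)
    {f : (Fin N → ℝ) → ℝ} (hf : ConvexOn ℝ s f) {a : Fin N → ℝ} (ha : a ∈ s)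
    (hD : HasFDerivAt f (0 : (Fin N → ℝ) →L[ℝ] ℝ) a) : IsMinOn f s a := by
  intro x hx
  simp only [Set.mem_setOf_eq]
  set γ : ℝ → (Fin N → ℝ) := fun t => a + t • (x - a) with hγdef
  have hγmem : ∀ t ∈ Set.Icc (0:ℝ) 1, γ t ∈ s := by
    intro t ht
    have h := hs ha hx (by linarith [ht.2] : (0:ℝ) ≤ 1 - t) ht.1 (by ring)
    have : (1 - t) • a + t • x = γ t := by
      simp only [hγdef, smul_sub, sub_smul, one_smul]
      abel
    rwa [this] at h
  have hγaffine : ∀ (c d t u : ℝ), c + d = 1 → γ (c * t + d * u) = c • γ t + d • γ u := by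
    intro c d t u hcd
    have ha' : a = c • a + d • a := by rw [← add_smul, hcd, one_smul]
    simp only [hγdef]
    nth_rewrite 1 [ha']
    module
  have hg : ConvexOn ℝ (Set.Icc (0:ℝ) 1) (f ∘ γ) := by
    refine ⟨convex_Icc 0 1, fun t ht u hu c d hc hd hcd => ?_⟩
    have := hf.2 (hγmem t ht) (hγmem u hu) hc hd hcd
    simp only [Function.comp_apply, smul_eq_mul]
    rw [hγaffine c d t u hcd]
    exact this
  have hderiv : HasDerivWithinAt (f ∘ γ) 0 (Set.Icc 0 1) 0 := by
    have hγd : HasDerivAt γ (x - a) 0 := by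
      simpa [hγdef] using ((hasDerivAt_id (0:ℝ)).smul_const (x - a)).const_add a
    have hfa : HasFDerivAt f (0 : (Fin N → ℝ) →L[ℝ] ℝ) (γ 0) := by
      simpa [hγdef] using hD
    have := hfa.comp_hasDerivAt 0 hγd
    simpa using this.hasDerivWithinAt
  have hslope := hg.le_slope_of_hasDerivWithinAt (Set.left_mem_Icc.2 zero_le_one)
    (Set.right_mem_Icc.2 zero_le_one) zero_lt_one hderiv
  rw [slope_def_field] at hslope
  have hγ0 : γ 0 = a := by simp [hγdef]
  have hγ1 : γ 1 = x := by simp [hγdef]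
  simp only [Function.comp_apply, hγ0, hγ1] at hslope
  have : 0 ≤ (f x - f a) / (1 - 0) := hslope
  linarith [this]


lemma pair_exists (hN : 2 ≤ N) : (⟨0, by omega⟩ : Fin N) < (⟨1, by omega⟩ : Fin N) := by
  simp [Fin.mk_lt_mk]

lemma lam_neg {m θ : Fin N → ℝ} (hN : 2 ≤ N) (hm : ∀ i, 0 < m i) (hθ : StrictMono θ)
    {lam : ℝ} (heq : ∀ i, gU m θ i = lam * m i * Real.sinh (2 * θ i)) : lam < 0 := by
  classical
  set F : Fin N → Fin N → ℝ := fun i j => m i * m j / Real.sinh (θ j - θ i) ^ 2 with hF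
  have hFsymm : ∀ i j, F j i = F i j := by
    intro i j
    simp only [hF]
    rw [sinh_sq_sub θ i j, mul_comm (m j) (m i)]
  have hT : (∑ i, θ i * gU m θ i) = ∑ i, ∑ j ∈ Finset.Ioi i, (θ i - θ j) * F i j := by
    have h1 : ∀ i, θ i * gU m θ i
        = (∑ j ∈ Finset.Ioi i, θ i * F i j) - ∑ j ∈ Finset.Iio i, θ i * F i j := by
      intro i
      rw [gU_eq hθ, mul_sub, Finset.mul_sum, Finset.mul_sum]
      congr 1
      apply Finset.sum_congr rfl
      intro j _
      rw [hF]
      rw [sinh_sq_sub θ]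
    calc (∑ i, θ i * gU m θ i)
        = (∑ i, ∑ j ∈ Finset.Ioi i, θ i * F i j)
          - ∑ i, ∑ j ∈ Finset.Iio i, θ i * F i j := by
          rw [← Finset.sum_sub_distrib]
          exact Finset.sum_congr rfl (fun i _ => h1 i)
      _ = (∑ i, ∑ j ∈ Finset.Ioi i, θ i * F i j)
          - ∑ i, ∑ j ∈ Finset.Ioi i, θ j * F i j := by
          congr 1
          rw [sum_Ioi_swap (fun i j => θ j * F i j)]
          apply Finset.sum_congr rfl
          intro i _
          apply Finset.sum_congr rfl
          intro j _
          rw [hFsymm]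
      _ = ∑ i, ∑ j ∈ Finset.Ioi i, (θ i - θ j) * F i j := by
          rw [← Finset.sum_sub_distrib]
          apply Finset.sum_congr rfl
          intro i _
          rw [← Finset.sum_sub_distrib]
          apply Finset.sum_congr rfl
          intro j _
          ring
  have hTneg : (∑ i, θ i * gU m θ i) < 0 := by
    rw [hT, Finset.sum_sigma']
    apply Finset.sum_neg
    · rintro ⟨i, j⟩ hij
      simp only [Finset.mem_sigma, Finset.mem_univ, Finset.mem_Ioi, true_and] at hij
      have h1 : θ i - θ j < 0 := by have := hθ hij; linarith
      have h2 : 0 < F i j := by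
        have hs : Real.sinh (θ j - θ i) ≠ 0 := Real.sinh_ne_zero.2 (by have := hθ hij; linarith)
        have := hm i
        have := hm j
        rw [hF]
        positivity
      exact mul_neg_of_neg_of_pos h1 h2
    · refine ⟨⟨⟨0, by omega⟩, ⟨1, by omega⟩⟩, ?_⟩
      simp only [Finset.mem_sigma, Finset.mem_univ, Finset.mem_Ioi, true_and]
      exact pair_exists hN
  have hS : 0 < ∑ i, m i * (θ i * Real.sinh (2 * θ i)) := by
    have hnonneg : ∀ i ∈ Finset.univ (α := Fin N), 0 ≤ m i * (θ i * Real.sinh (2 * θ i)) := by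
      intro i _
      apply mul_nonneg (hm i).le
      rcases le_or_gt 0 (θ i) with h | h
      · exact mul_nonneg h (Real.sinh_nonneg_iff.2 (by linarith))
      · have hs : Real.sinh (2 * θ i) ≤ 0 := Real.sinh_nonpos_iff.2 (by linarith)
        nlinarith
    have hex : ∃ i ∈ Finset.univ (α := Fin N), 0 < m i * (θ i * Real.sinh (2 * θ i)) := by
      have hlt01 := hθ (pair_exists hN)
      have key : ∀ i : Fin N, θ i ≠ 0 → 0 < m i * (θ i * Real.sinh (2 * θ i)) := by
        intro i hi
        apply mul_pos (hm i)
        rcases lt_or_gt_of_ne hi with h | h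
        · exact mul_pos_of_neg_of_neg h (Real.sinh_neg_iff.2 (by linarith))
        · exact mul_pos h (Real.sinh_pos_iff.2 (by linarith))
      rcases eq_or_ne (θ ⟨0, by omega⟩) 0 with h0 | h0
      · exact ⟨⟨1, by omega⟩, Finset.mem_univ _, key _ (by rw [h0] at hlt01; linarith)⟩
      · exact ⟨⟨0, by omega⟩, Finset.mem_univ _, key _ h0⟩
    exact Finset.sum_pos' hnonneg hex
  have hTe : (∑ i, θ i * gU m θ i) = lam * ∑ i, m i * (θ i * Real.sinh (2 * θ i)) := by
    rw [Finset.mul_sum]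
    apply Finset.sum_congr rfl
    intro i _
    rw [heq i]
    ring
  rw [hTe] at hTneg
  nlinarith

lemma unique_sol {m : Fin N → ℝ} (hN : 2 ≤ N) (hm : ∀ i, 0 < m i) {c : ℝ}
    {θ σ : Fin N → ℝ} (hθ : StrictMono θ) (hσ : StrictMono σ)
    (hIθ : Ifun m θ = c) (hIσ : Ifun m σ = c)
    {lam lam' : ℝ} (heθ : ∀ i, gU m θ i = lam * m i * Real.sinh (2 * θ i))
    (heσ : ∀ i, gU m σ i = lam' * m i * Real.sinh (2 * σ i)) : θ = σ := by
  have hl := lam_neg hN hm hθ heθ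
  have hl' := lam_neg hN hm hσ heσ
  have key : ∀ (τ : Fin N → ℝ) (lt : ℝ), StrictMono τ →
      (∀ i, gU m τ i = lt * m i * Real.sinh (2 * τ i)) →
      IsMinOn (fun ρ => Ufun m ρ + (-lt) * Ifun m ρ) (Omeg N) τ := by
    intro τ lt hτ heτ
    apply isMinOn_of_deriv_zero convex_Omeg
      (strictConvexOn_G hm (by linarith [lam_neg hN hm hτ heτ] : (0:ℝ) < -lt)).convexOn hτ
    have hD : HasFDerivAt (fun ρ => Ufun m ρ + (-lt) * Ifun m ρ)
        (Dc (gU m τ) + (-lt) • Dc (gI m τ)) τ :=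
      (hasStrictFDerivAt_Ufun m hτ).hasFDerivAt.add
        (((hasStrictFDerivAt_Ifun m τ).hasFDerivAt).const_mul (-lt))
    have hzero : Dc (gU m τ) + (-lt) • Dc (gI m τ) = 0 := by
      ext v
      simp only [ContinuousLinearMap.add_apply, ContinuousLinearMap.coe_smul',
        Pi.smul_apply, smul_eq_mul, Dc_apply, ContinuousLinearMap.zero_apply]
      rw [Finset.mul_sum, ← Finset.sum_add_distrib]
      apply Finset.sum_eq_zero
      intro i _
      rw [heτ i, gI]
      ring
    rwa [hzero] at hD
  have minθ := key θ lam hθ heθ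
  have minσ := key σ lam' hσ heσ
  have hθm : θ ∈ Omeg N := hθ
  have hσm : σ ∈ Omeg N := hσ
  have h1 : Ufun m θ ≤ Ufun m σ := by
    have := minθ hσm
    simp only [Set.mem_setOf_eq, hIθ, hIσ] at this
    linarith
  have h2 : Ufun m σ ≤ Ufun m θ := by
    have := minσ hθm
    simp only [Set.mem_setOf_eq, hIθ, hIσ] at this
    linarith
  have hUeq : Ufun m θ = Ufun m σ := le_antisymm h1 h2
  have minσ' : IsMinOn (fun ρ => Ufun m ρ + (-lam) * Ifun m ρ) (Omeg N) σ := by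
    intro x hx
    have hx' := minθ hx
    simp only [Set.mem_setOf_eq] at hx' ⊢
    rw [hUeq] at hx'
    rw [hIσ]
    rw [hIθ] at hx'
    exact hx'
  exact (strictConvexOn_G hm (by linarith : (0:ℝ) < -lam)).eq_of_isMinOn minθ minσ' hθm hσm


lemma Dc_single (c : Fin N → ℝ) (k : Fin N) : Dc c (Pi.single k 1) = c k := by
  rw [Dc_apply]
  rw [Finset.sum_eq_single_of_mem k (Finset.mem_univ k)]
  · simp
  · intro i _ hik
    simp [Pi.single_apply, hik]

lemma continuous_Ifun (m : Fin N → ℝ) : Continuous (Ifun m) := by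
  apply continuous_finset_sum
  intro i _
  exact continuous_const.mul ((Real.continuous_sinh.comp (continuous_apply i)).pow 2)

lemma Ufun_nonneg_term {m : Fin N → ℝ} (hm : ∀ i, 0 < m i) {θ : Fin N → ℝ}
    (hθ : ∀ i j, i < j → 0 < θ j - θ i) (i : Fin N) :
    0 ≤ ∑ j ∈ Finset.Ioi i, m i * m j * coth (θ j - θ i) := by
  apply Finset.sum_nonneg
  intro j hj
  rw [Finset.mem_Ioi] at hj
  exact le_of_lt (mul_pos (mul_pos (hm i) (hm j)) (coth_pos (hθ i j hj)))

/-- a single term bounds U from below -/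
lemma single_term_le_Ufun {m : Fin N → ℝ} (hm : ∀ i, 0 < m i) {θ : Fin N → ℝ}
    (hθ : ∀ i j, i < j → 0 < θ j - θ i) {i j : Fin N} (hij : i < j) :
    m i * m j * coth (θ j - θ i) ≤ Ufun m θ := by
  have h1 : m i * m j * coth (θ j - θ i)
      ≤ ∑ k ∈ Finset.Ioi i, m i * m k * coth (θ k - θ i) := by
    apply Finset.single_le_sum (f := fun k => m i * m k * coth (θ k - θ i))
    · intro k hk
      rw [Finset.mem_Ioi] at hk
      exact le_of_lt (mul_pos (mul_pos (hm i) (hm k)) (coth_pos (hθ i k hk)))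
    · exact Finset.mem_Ioi.2 hij
  have h2 : (∑ k ∈ Finset.Ioi i, m i * m k * coth (θ k - θ i)) ≤ Ufun m θ := by
    apply Finset.single_le_sum
      (f := fun l => ∑ k ∈ Finset.Ioi l, m l * m k * coth (θ k - θ l))
    · intro l _
      exact Ufun_nonneg_term hm hθ l
    · exact Finset.mem_univ i
  linarith

set_option maxHeartbeats 1000000 in
lemma exists_sol {m : Fin N → ℝ} (hN : 2 ≤ N) (hm : ∀ i, 0 < m i) {c : ℝ} (hc : 0 < c) :
    ∃ θ : Fin N → ℝ, StrictMono θ ∧ Ifun m θ = c ∧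
      ∃ lam : ℝ, ∀ i, gU m θ i = lam * m i * Real.sinh (2 * θ i) := by
  classical
  have i0 : Fin N := ⟨0, by omega⟩
  -- Step 1: initial strictly ordered point p with Ifun m p = c
  set h : ℝ → ℝ := fun t => Ifun m (fun i => t * ((i : ℕ) + 1)) with hh
  have hcont : Continuous h := by
    apply continuous_finset_sum
    intro i _
    exact continuous_const.mul
      ((Real.continuous_sinh.comp (continuous_id.mul continuous_const)).pow 2)
  have h0 : h 0 = 0 := by simp [hh, Ifun]
  set T : ℝ := Real.sqrt (c / m (⟨0, by omega⟩ : Fin N)) with hT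
  have hTpos : 0 < T := Real.sqrt_pos.2 (div_pos hc (hm _))
  have hhT : c ≤ h T := by
    have hterm : m (⟨0, by omega⟩ : Fin N) * Real.sinh (T * (((⟨0, by omega⟩ : Fin N) : ℕ) + 1)) ^ 2
        ≤ h T := by
      apply Finset.single_le_sum (f := fun i => m i * Real.sinh (T * ((i : ℕ) + 1)) ^ 2)
      · intro k _
        have := hm k
        positivity
      · exact Finset.mem_univ _
    have hcast : (((⟨0, by omega⟩ : Fin N) : ℕ) : ℝ) + 1 = 1 := by norm_num
    rw [hcast, mul_one] at hterm
    have hTleSinh : T ≤ Real.sinh T := Real.self_le_sinh_iff.2 hTpos.le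
    have hTsq : T ^ 2 = c / m (⟨0, by omega⟩ : Fin N) :=
      Real.sq_sqrt (le_of_lt (div_pos hc (hm _)))
    have : c ≤ m (⟨0, by omega⟩ : Fin N) * Real.sinh T ^ 2 := by
      have hmpos := hm (⟨0, by omega⟩ : Fin N)
      have : m (⟨0, by omega⟩ : Fin N) * T ^ 2 = c := by
        rw [hTsq]
        field_simp
      have hTs2 : T * T ≤ Real.sinh T * Real.sinh T :=
        mul_le_mul hTleSinh hTleSinh hTpos.le (hTpos.trans_le hTleSinh).le
      nlinarith [hTs2, hmpos]
    linarith
  obtain ⟨t, htmem, hteq⟩ : ∃ t ∈ Set.Icc 0 T, h t = c := by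
    have := intermediate_value_Icc hTpos.le hcont.continuousOn
    have hc' : c ∈ Set.Icc (h 0) (h T) := by
      rw [h0]
      exact ⟨hc.le, hhT⟩
    obtain ⟨t, ht, ht'⟩ := this hc'
    exact ⟨t, ht, ht'⟩
  have htpos : 0 < t := by
    rcases eq_or_lt_of_le htmem.1 with rfl | h'
    · rw [h0] at hteq
      exact absurd hteq.symm (ne_of_gt hc)
    · exact h'
  set p : Fin N → ℝ := fun i => t * ((i : ℕ) + 1) with hp
  have hpmono : StrictMono p := by
    intro i j hij
    have : ((i : ℕ) : ℝ) < ((j : ℕ) : ℝ) := by exact_mod_cast hij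
    simp only [hp]
    nlinarith
  have hIp : Ifun m p = c := hteq
  have hpgap : ∀ i j : Fin N, i < j → t ≤ p j - p i := by
    intro i j hij
    have h1 : (i : ℕ) + 1 ≤ (j : ℕ) := hij
    have h2 : ((i : ℕ) : ℝ) + 1 ≤ ((j : ℕ) : ℝ) := by exact_mod_cast h1
    simp only [hp]
    nlinarith
  -- Step 2: constants
  set u₀ : ℝ := Ufun m p with hu₀
  have hppos : ∀ i j : Fin N, i < j → 0 < p j - p i := fun i j hij => sub_pos.2 (hpmono hij)
  have hu₀pos : 0 < u₀ := by
    have := single_term_le_Ufun hm hppos (pair_exists hN)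
    have h1 := mul_pos (mul_pos (hm ⟨0, by omega⟩) (hm ⟨1, by omega⟩))
      (coth_pos (hppos _ _ (pair_exists hN)))
    linarith
  set Mm : ℝ := Finset.univ.inf' ⟨⟨0, by omega⟩, Finset.mem_univ _⟩ m with hMm
  have hMmpos : 0 < Mm := by
    rw [hMm]
    apply (Finset.lt_inf'_iff _).2
    exact fun i _ => hm i
  have hMmle : ∀ i, Mm ≤ m i := fun i => Finset.inf'_le m (Finset.mem_univ i)
  set δ₀ : ℝ := Real.arsinh (Mm ^ 2 / (u₀ + 1)) with hδ₀
  have hδ₀pos : 0 < δ₀ := Real.arsinh_pos_iff.2 (by positivity)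
  have hδ₀bound : u₀ < Mm ^ 2 * coth δ₀ := by
    have h1 : Real.sinh δ₀ = Mm ^ 2 / (u₀ + 1) := Real.sinh_arsinh _
    have h2 : 1 / Real.sinh δ₀ ≤ coth δ₀ := inv_sinh_le_coth hδ₀pos
    have h3 : 1 / Real.sinh δ₀ = (u₀ + 1) / Mm ^ 2 := by
      rw [h1]
      rw [one_div_div]
    have h4 : Mm ^ 2 * ((u₀ + 1) / Mm ^ 2) = u₀ + 1 := by
      field_simp
    nlinarith [h2, sq_nonneg Mm]
  set δ : ℝ := min t δ₀ with hδ
  have hδpos : 0 < δ := lt_min htpos hδ₀pos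
  have hδbound : u₀ < Mm ^ 2 * coth δ := by
    have := coth_antitone hδpos (min_le_right t δ₀)
    nlinarith [sq_nonneg Mm, hMmpos]
  -- Step 3: the compact set K
  set K : Set (Fin N → ℝ) :=
    {θ | Ifun m θ = c ∧ ∀ i j : Fin N, i < j → δ ≤ θ j - θ i} with hK
  have hKclosed : IsClosed K := by
    have hKeq : K = (Ifun m)⁻¹' {c}
        ∩ ⋂ (i : Fin N), ⋂ (j : Fin N), {θ | i < j → δ ≤ θ j - θ i} := by
      ext θ
      simp only [hK, Set.mem_setOf_eq, Set.mem_inter_iff, Set.mem_preimage,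
        Set.mem_singleton_iff, Set.mem_iInter]
    rw [hKeq]
    apply IsClosed.inter
    · exact IsClosed.preimage (continuous_Ifun m) isClosed_singleton
    · refine isClosed_iInter fun i => isClosed_iInter fun j => ?_
      by_cases hij : i < j
      · have : {θ : Fin N → ℝ | i < j → δ ≤ θ j - θ i} = {θ | δ ≤ θ j - θ i} := by
          ext θ
          simp [hij]
        rw [this]
        exact isClosed_le continuous_const ((continuous_apply j).sub (continuous_apply i))
      · have : {θ : Fin N → ℝ | i < j → δ ≤ θ j - θ i} = Set.univ := by
          ext θ
          simp [hij]
        rw [this]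
        exact isClosed_univ
  set R : ℝ := Real.sqrt (c / Mm) with hR
  have hRnonneg : 0 ≤ R := Real.sqrt_nonneg _
  have hKsub : K ⊆ Set.pi Set.univ (fun _ : Fin N => Set.Icc (-R) R) := by
    intro θ hθ i _
    have hIθ : Ifun m θ = c := hθ.1
    have hterm : m i * Real.sinh (θ i) ^ 2 ≤ c := by
      rw [← hIθ, Ifun]
      apply Finset.single_le_sum (f := fun k => m k * Real.sinh (θ k) ^ 2)
      · intro k _
        have := hm k
        positivity
      · exact Finset.mem_univ i
    have hsq : Real.sinh (θ i) ^ 2 ≤ R ^ 2 := by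
      have hRsq : R ^ 2 = c / Mm := Real.sq_sqrt (by positivity)
      rw [hRsq]
      rw [le_div_iff₀ hMmpos]
      calc Real.sinh (θ i) ^ 2 * Mm ≤ Real.sinh (θ i) ^ 2 * m i := by
            apply mul_le_mul_of_nonneg_left (hMmle i) (sq_nonneg _)
        _ ≤ c := by linarith [hterm]
    have habs : |Real.sinh (θ i)| ≤ R := by
      nlinarith [abs_nonneg (Real.sinh (θ i)), sq_abs (Real.sinh (θ i))]
    have habs2 : |θ i| ≤ R := by
      have h1 : |θ i| ≤ Real.sinh |θ i| := Real.self_le_sinh_iff.2 (abs_nonneg _)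
      rw [← Real.abs_sinh] at h1
      linarith
    exact abs_le.1 habs2
  have hKcompact : IsCompact K :=
    IsCompact.of_isClosed_subset (isCompact_univ_pi fun _ => isCompact_Icc) hKclosed hKsub
  have hpK : p ∈ K := by
    refine ⟨hIp, fun i j hij => ?_⟩
    have := hpgap i j hij
    have := min_le_left t δ₀
    linarith
  -- Step 4: continuity of U on K
  have hUcont : ContinuousOn (Ufun m) K := by
    apply continuousOn_finset_sum
    intro i _
    apply continuousOn_finset_sum
    intro j hj
    rw [Finset.mem_Ioi] at hj
    apply ContinuousOn.mul continuousOn_const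
    apply ContinuousOn.div
    · exact (Real.continuous_cosh.comp ((continuous_apply j).sub (continuous_apply i))).continuousOn
    · exact (Real.continuous_sinh.comp ((continuous_apply j).sub (continuous_apply i))).continuousOn
    · intro θ hθ
      apply Real.sinh_ne_zero.2
      have := hθ.2 i j hj
      linarith
  -- Step 5: minimize
  obtain ⟨a, haK, hamin⟩ := hKcompact.exists_isMinOn ⟨p, hpK⟩ hUcont
  have hUa : Ufun m a ≤ u₀ := hamin hpK
  have hagap : ∀ i j : Fin N, i < j → δ < a j - a i := by
    intro i j hij
    rcases lt_or_eq_of_le (haK.2 i j hij) with h | h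
    · exact h
    · exfalso
      have hgap : ∀ k l : Fin N, k < l → 0 < a l - a k := by
        intro k l hkl
        have := haK.2 k l hkl
        linarith
      have h1 := single_term_le_Ufun hm hgap hij
      rw [← h] at h1
      have h2 : Mm ^ 2 * coth δ ≤ m i * m j * coth δ := by
        have hcp := coth_pos hδpos
        have hmm : Mm * Mm ≤ m i * m j := mul_le_mul (hMmle i) (hMmle j) hMmpos.le (hm i).le
        exact mul_le_mul_of_nonneg_right (by nlinarith [hmm]) hcp.le
      linarith
  have hamono : StrictMono a := by
    intro i j hij
    have := hagap i j hij
    have := hδpos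
    linarith
  -- Step 6: Lagrange multipliers
  have hextr : IsLocalExtrOn (Ufun m) {x | Ifun m x = Ifun m a} a := by
    left
    set V : Set (Fin N → ℝ) := {θ | ∀ i j : Fin N, i < j → δ < θ j - θ i} with hV
    have hVopen : IsOpen V := by
      have : V = ⋂ (i : Fin N), ⋂ (j : Fin N), {θ | i < j → δ < θ j - θ i} := by
        ext θ
        simp only [hV, Set.mem_setOf_eq, Set.mem_iInter]
      rw [this]
      refine isOpen_iInter_of_finite fun i => isOpen_iInter_of_finite fun j => ?_
      by_cases hij : i < j
      · have : {θ : Fin N → ℝ | i < j → δ < θ j - θ i} = {θ | δ < θ j - θ i} := by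
          ext θ
          simp [hij]
        rw [this]
        exact isOpen_lt continuous_const ((continuous_apply j).sub (continuous_apply i))
      · have : {θ : Fin N → ℝ | i < j → δ < θ j - θ i} = Set.univ := by
          ext θ
          simp [hij]
        rw [this]
        exact isOpen_univ
    have haV : a ∈ V := fun i j hij => hagap i j hij
    filter_upwards [mem_nhdsWithin_of_mem_nhds (hVopen.mem_nhds haV), self_mem_nhdsWithin]
      with x hxV hxI
    have hxK : x ∈ K := by
      refine ⟨?_, fun i j hij => (hxV i j hij).le⟩
      rw [hxI, haK.1]
    exact hamin hxK
  obtain ⟨Λ, Λ₀, hne, hsum⟩ := hextr.exists_multipliers_of_hasStrictFDerivAt_1d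
    (hasStrictFDerivAt_Ifun m a) (hasStrictFDerivAt_Ufun m hamono)
  have hcoord : ∀ k, Λ * gI m a k + Λ₀ * gU m a k = 0 := by
    intro k
    have := congrArg (fun L : (Fin N → ℝ) →L[ℝ] ℝ => L (Pi.single k 1)) hsum
    simpa [ContinuousLinearMap.add_apply, Dc_single, smul_eq_mul] using this
  have hΛ₀ : Λ₀ ≠ 0 := by
    intro hzero
    have hΛ : Λ ≠ 0 := by
      intro hzero'
      apply hne
      rw [hzero, hzero']
      rfl
    have hzero2 : ∀ k, a k = 0 := by
      intro k
      have := hcoord k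
      rw [hzero, zero_mul, add_zero] at this
      have hgI : gI m a k = 0 := by
        rcases mul_eq_zero.1 this with h | h
        · exact absurd h hΛ
        · exact h
      rw [gI] at hgI
      rcases mul_eq_zero.1 hgI with h | h
      · exact absurd h (ne_of_gt (hm k))
      · have := Real.sinh_eq_zero.1 h
        linarith
    have : Ifun m a = 0 := by
      rw [Ifun]
      apply Finset.sum_eq_zero
      intro i _
      rw [hzero2 i]
      simp
    rw [haK.1] at this
    linarith
  refine ⟨a, hamono, haK.1, -Λ / Λ₀, fun i => ?_⟩
  have := hcoord i
  rw [gI] at this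
  field_simp
  linarith [this]

end St14

/-- Moulton-type theorem on the geodesic `H¹_xw` of `H³`: for each
`c > 0` and each ordering there is exactly one geodesic central configuration. -/
theorem statement14 (N : ℕ) (hN : 2 ≤ N) (m : Fin N → ℝ) (hm : ∀ i, 0 < m i)
    (c : ℝ) (hc : 0 < c) :
    ∃! θ : Fin N → ℝ, StrictMono θ ∧ (∑ i, m i * Real.sinh (θ i) ^ 2 = c) ∧
      ∃ lam : ℝ, ∀ i,
        (∑ j ∈ Finset.univ.erase i,
            m i * m j * Real.sign (θ j - θ i) / Real.sinh (θ i - θ j) ^ 2) =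
          lam * m i * Real.sinh (2 * θ i) := by
  obtain ⟨a, hamono, hIa, lam, hlam⟩ := St14.exists_sol hN hm hc
  refine ⟨a, ⟨hamono, hIa, lam, fun i => hlam i⟩, ?_⟩
  rintro y ⟨hymono, hIy, lam', hlam'⟩
  exact St14.unique_sol hN hm hymono hamono hIy hIa hlam' hlam
end
end

section
/- Let m₁, m₂ > 0 and let 0 ≤ θ₁ < θ₂ ≤ 2π with θ₂ − θ₁ ∉ {0, π, 2π}, and set q₁ = (−sin θ₁, 0, cos θ₁, 0), q₂ = (−sin θ₂, 0, cos θ₂, 0) ∈ S³. Then there exists λ ∈ ℝ with ∇_{q₁}U(q) = λ∇_{q₁}I(q) and ∇_{q₂}U(q) = λ∇_{q₂}I(q) (i.e. (q₁,q₂) is a central configuration) if and only if m₁ sin 2θ₁ + m₂ sin 2θ₂ = 0 and sin 2θ₁ ≠ 0. -/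
noncomputable section
open Real Finset

private lemma auxdiv (A d e L : ℝ) (hd : d ≠ 0) (h : L * d = A * e) : L = A / d * e := by
  rw [div_mul_eq_mul_div, eq_div_iff hd, h]

private lemma auxdivneg (A d e L : ℝ) (hd : d ≠ 0) (h : L * d = -(A * e)) :
    L = -(A / d * e) := by
  rw [div_mul_eq_mul_div, ← neg_div, eq_div_iff hd, h]

/-- Criterion for two-body central configurations on the geodesic
`S¹_xz` of `S³`. -/
theorem statement15 (m1 m2 : ℝ) (hm1 : 0 < m1) (hm2 : 0 < m2) (θ1 θ2 : ℝ)
    (h1 : 0 ≤ θ1) (h12 : θ1 < θ2) (h2 : θ2 ≤ 2 * π)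
    (hd : θ2 - θ1 ≠ 0 ∧ θ2 - θ1 ≠ π ∧ θ2 - θ1 ≠ 2 * π) :
    (∃ lam : ℝ, ∀ i : Fin 2,
        gradUS (![m1, m2])
          (![(![-Real.sin θ1, 0, Real.cos θ1, 0] : V4),
             (![-Real.sin θ2, 0, Real.cos θ2, 0] : V4)]) i =
          lam • gradIS (![m1, m2])
            (![(![-Real.sin θ1, 0, Real.cos θ1, 0] : V4),
               (![-Real.sin θ2, 0, Real.cos θ2, 0] : V4)]) i) ↔
    (m1 * Real.sin (2 * θ1) + m2 * Real.sin (2 * θ2) = 0 ∧ Real.sin (2 * θ1) ≠ 0) := by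

  obtain ⟨hd0, hdpi, hd2pi⟩ := hd
  have pipos := Real.pi_pos
  have p1 := Real.sin_sq_add_cos_sq θ1
  have p2 := Real.sin_sq_add_cos_sq θ2
  have hpos : 0 < θ2 - θ1 := sub_pos.mpr h12
  have hlt : θ2 - θ1 < 2 * π := lt_of_le_of_ne (by linarith) hd2pi
  have hσ : Real.sin (θ2 - θ1) ≠ 0 := by
    intro h
    rcases Real.sin_eq_zero_iff.mp h with ⟨n, hn⟩
    rw [← hn] at hpos hlt
    have hn0 : (0:ℤ) < n := by exact_mod_cast show (0:ℝ) < (n:ℝ) by nlinarith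
    have hn2 : (n:ℤ) < 2 := by exact_mod_cast show (n:ℝ) < (2:ℝ) by nlinarith
    have hn1 : n = 1 := by omega
    rw [hn1] at hn
    exact hdpi (by push_cast at hn; linarith)
  set s1 := Real.sin θ1 with hs1def
  set c1 := Real.cos θ1 with hc1def
  set s2 := Real.sin θ2 with hs2def
  set c2 := Real.cos θ2 with hc2def
  have hσval : Real.sin (θ2 - θ1) = s2 * c1 - c2 * s1 := Real.sin_sub θ2 θ1
  have hcval : Real.cos (θ2 - θ1) = c2 * c1 + s2 * s1 := Real.cos_sub θ2 θ1
  have hσ' : s2 * c1 - c2 * s1 ≠ 0 := hσval ▸ hσ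
  have hdot12 : dot4 ![-s1, 0, c1, 0] ![-s2, 0, c2, 0] = Real.cos (θ2 - θ1) := by
    simp only [dot4, Matrix.cons_val_zero, Matrix.cons_val_one, Matrix.head_cons,
      Matrix.cons_val_two, Matrix.tail_cons, Matrix.cons_val_three]
    rw [hcval]; ring
  have hdot21 : dot4 ![-s2, 0, c2, 0] ![-s1, 0, c1, 0] = Real.cos (θ2 - θ1) := by
    simp only [dot4, Matrix.cons_val_zero, Matrix.cons_val_one, Matrix.head_cons,
      Matrix.cons_val_two, Matrix.tail_cons, Matrix.cons_val_three]
    rw [hcval]; ring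
  have hd12 : dS ![-s1, 0, c1, 0] ![-s2, 0, c2, 0] = Real.arccos (Real.cos (θ2 - θ1)) := by
    rw [dS, hdot12]
  have hd21 : dS ![-s2, 0, c2, 0] ![-s1, 0, c1, 0] = Real.arccos (Real.cos (θ2 - θ1)) := by
    rw [dS, hdot21]
  set D := Real.arccos (Real.cos (θ2 - θ1)) with hDdef
  have hcosDval : Real.cos D = c2 * c1 + s2 * s1 := by
    rw [hDdef, Real.cos_arccos (Real.neg_one_le_cos _) (Real.cos_le_one _), hcval]
  have hsinD : 0 < Real.sin D := by
    rw [hDdef, Real.sin_arccos]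
    apply Real.sqrt_pos.mpr
    have hp := Real.sin_sq_add_cos_sq (θ2 - θ1)
    have h2 : 0 < Real.sin (θ2 - θ1) ^ 2 :=
      lt_of_le_of_ne (sq_nonneg _) (Ne.symm (pow_ne_zero 2 hσ))
    nlinarith
  have hs3 : (0:ℝ) < Real.sin D ^ 3 := by positivity
  have hA : 0 < m1 * m2 / Real.sin D ^ 3 := div_pos (mul_pos hm1 hm2) hs3
  have hAσ : m1 * m2 / Real.sin D ^ 3 * (s2 * c1 - c2 * s1) ≠ 0 :=
    mul_ne_zero (ne_of_gt hA) hσ'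
  have her0 : (Finset.univ.erase (0 : Fin 2)) = {1} := by decide
  have her1 : (Finset.univ.erase (1 : Fin 2)) = {0} := by decide
  have key : ∀ lam : ℝ,
      (∀ i : Fin 2, gradUS ![m1, m2] ![(![-s1,0,c1,0] : V4), (![-s2,0,c2,0] : V4)] i
        = lam • gradIS ![m1, m2] ![(![-s1,0,c1,0] : V4), (![-s2,0,c2,0] : V4)] i) ↔
      (m1 * m2 / Real.sin D ^ 3 * ((s2 * c1 - c2 * s1) * c1) = lam * (2 * m1 * (s1 * c1 ^ 2)) ∧
       m1 * m2 / Real.sin D ^ 3 * ((s2 * c1 - c2 * s1) * s1) = lam * (2 * m1 * (s1 ^ 2 * c1)) ∧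
       m1 * m2 / Real.sin D ^ 3 * ((s2 * c1 - c2 * s1) * c2) = -(lam * (2 * m2 * (s2 * c2 ^ 2))) ∧
       m1 * m2 / Real.sin D ^ 3 * ((s2 * c1 - c2 * s1) * s2) = -(lam * (2 * m2 * (s2 ^ 2 * c2)))) := by
    intro lam
    constructor
    · intro H
      have h00 := congrFun (H 0) 0
      have h02 := congrFun (H 0) 2
      have h10 := congrFun (H 1) 0
      have h12' := congrFun (H 1) 2
      simp [gradUS, gradIS, her0, her1, hd12, hd21, hcosDval, Finset.sum_singleton,
        Matrix.cons_val_zero, Matrix.cons_val_one, Matrix.head_cons, Matrix.cons_val_two,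
        Matrix.tail_cons, Matrix.cons_val_three, Pi.smul_apply, Pi.sub_apply,
        smul_eq_mul] at h00 h02 h10 h12'
      refine ⟨?_, ?_, ?_, ?_⟩
      · linear_combination (-1) * h00 + (m1 * m2 / Real.sin D ^ 3) * s2 * p1
      · linear_combination (-1) * h02 - (m1 * m2 / Real.sin D ^ 3) * c2 * p1
      · linear_combination h10 - (m1 * m2 / Real.sin D ^ 3) * s1 * p2
      · linear_combination h12' + (m1 * m2 / Real.sin D ^ 3) * c1 * p2
    · rintro ⟨F1, F2, F3, F4⟩
      intro i
      fin_cases i <;> funext k <;> fin_cases k <;>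
        simp [gradUS, gradIS, her0, her1, hd12, hd21, hcosDval, Finset.sum_singleton,
          Matrix.cons_val_zero, Matrix.cons_val_one, Matrix.head_cons, Matrix.cons_val_two,
          Matrix.tail_cons, Matrix.cons_val_three, Pi.smul_apply, Pi.sub_apply, smul_eq_mul]
      · linear_combination (-1) * F1 + (m1 * m2 / Real.sin D ^ 3) * s2 * p1
      · linear_combination (-1) * F2 - (m1 * m2 / Real.sin D ^ 3) * c2 * p1
      · linear_combination F3 + (m1 * m2 / Real.sin D ^ 3) * s1 * p2
      · linear_combination F4 - (m1 * m2 / Real.sin D ^ 3) * c1 * p2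
  constructor
  · rintro ⟨lam, H⟩
    obtain ⟨F1, F2, F3, F4⟩ := (key lam).1 H
    have hs1 : s1 ≠ 0 := by
      intro h
      rw [h] at F1 hAσ p1
      have h1 : (m1 * m2 / Real.sin D ^ 3 * (s2 * c1 - c2 * 0)) * c1 = 0 := by
        linear_combination F1
      rcases mul_eq_zero.mp h1 with h2 | h2
      · exact hAσ h2
      · rw [h2] at p1; norm_num at p1
    have hc1 : c1 ≠ 0 := by
      intro h
      rw [h] at F2 hAσ p1
      have h1 : (m1 * m2 / Real.sin D ^ 3 * (s2 * 0 - c2 * s1)) * s1 = 0 := by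
        linear_combination F2
      rcases mul_eq_zero.mp h1 with h2 | h2
      · exact hAσ h2
      · rw [h2] at p1; norm_num at p1
    have hs2 : s2 ≠ 0 := by
      intro h
      rw [h] at F3 hAσ p2
      have h1 : (m1 * m2 / Real.sin D ^ 3 * (0 * c1 - c2 * s1)) * c2 = 0 := by
        linear_combination F3
      rcases mul_eq_zero.mp h1 with h2 | h2
      · exact hAσ h2
      · rw [h2] at p2; norm_num at p2
    have hc2 : c2 ≠ 0 := by
      intro h
      rw [h] at F4 hAσ p2
      have h1 : (m1 * m2 / Real.sin D ^ 3 * (s2 * c1 - 0 * s1)) * s2 = 0 := by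
        linear_combination F4
      rcases mul_eq_zero.mp h1 with h2 | h2
      · exact hAσ h2
      · rw [h2] at p2; norm_num at p2
    have G1 : m1 * m2 / Real.sin D ^ 3 * (s2 * c1 - c2 * s1) = lam * (2 * m1 * s1) * c1 :=
      mul_right_cancel₀ hc1 (by linear_combination F1)
    have G3 : m1 * m2 / Real.sin D ^ 3 * (s2 * c1 - c2 * s1) = -(lam * (2 * m2 * s2) * c2) :=
      mul_right_cancel₀ hc2 (by linear_combination F3)
    have hlamne : lam ≠ 0 := by
      intro h
      apply hAσ
      rw [h] at G1
      linear_combination G1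
    have hsum : lam * (m1 * (2 * (s1 * c1)) + m2 * (2 * (s2 * c2))) = 0 := by
      linear_combination G3 - G1
    have hmain : m1 * (2 * (s1 * c1)) + m2 * (2 * (s2 * c2)) = 0 := by
      rcases mul_eq_zero.mp hsum with h | h
      · exact absurd h hlamne
      · exact h
    constructor
    · rw [Real.sin_two_mul, Real.sin_two_mul, ← hs1def, ← hc1def, ← hs2def, ← hc2def]
      linear_combination hmain
    · rw [Real.sin_two_mul, ← hs1def, ← hc1def]
      exact mul_ne_zero (mul_ne_zero two_ne_zero hs1) hc1
  · rintro ⟨hE, hne⟩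
    rw [Real.sin_two_mul, Real.sin_two_mul, ← hs1def, ← hc1def, ← hs2def, ← hc2def] at hE
    rw [Real.sin_two_mul, ← hs1def, ← hc1def] at hne
    have hs1 : s1 ≠ 0 := by
      intro h; apply hne; rw [h]; ring
    have hc1 : c1 ≠ 0 := by
      intro h; apply hne; rw [h]; ring
    have hsc2 : m2 * (s2 * c2) = -(m1 * (s1 * c1)) := by linarith
    have hm1c1s1 : m1 * (s1 * c1) ≠ 0 := mul_ne_zero (ne_of_gt hm1) (mul_ne_zero hs1 hc1)
    have hs2 : s2 ≠ 0 := by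
      intro h; rw [h] at hsc2; apply hm1c1s1; linear_combination hsc2
    have hc2 : c2 ≠ 0 := by
      intro h; rw [h] at hsc2; apply hm1c1s1; linear_combination hsc2
    have hden : (2 * m1 * (s1 * c1)) ≠ 0 :=
      mul_ne_zero (mul_ne_zero two_ne_zero (ne_of_gt hm1)) (mul_ne_zero hs1 hc1)
    refine ⟨m1 * m2 / Real.sin D ^ 3 * (s2 * c1 - c2 * s1) / (2 * m1 * (s1 * c1)),
      (key _).2 ⟨?_, ?_, ?_, ?_⟩⟩
    · exact auxdiv _ _ _ _ hden (by ring)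
    · exact auxdiv _ _ _ _ hden (by ring)
    · exact auxdivneg _ _ _ _ hden (by
        linear_combination (m1 * m2 / Real.sin D ^ 3 * (s2 * c1 - c2 * s1) * 2 * c2) * hsc2)
    · exact auxdivneg _ _ _ _ hden (by
        linear_combination (m1 * m2 / Real.sin D ^ 3 * (s2 * c1 - c2 * s1) * 2 * s2) * hsc2)
end
end

section
/- Let 0 < m₁ < m₂, M = m₁ + m₂, and c > 0. Consider the set A_c of pairs (θ₁,θ₂) with θ₁ ∈ (0, π/2), θ₂ ∈ (θ₁, 2π), satisfying m₁ sin²θ₁ + m₂ sin²θ₂ = c, m₁ sin 2θ₁ + m₂ sin 2θ₂ = 0, and sin 2θ₁ ≠ 0. Then: A_c has exactly two elements if c ∈ (0, m₁) ∪ (m₂, M), and A_c is empty otherwise (in particular for c ∈ [m₁, m₂] and for c ≥ M). Moreover, for every (θ₁,θ₂) ∈ A_c one has sin²θ₂ = c(m₁−c)/(m₂(M−2c)) and sin²θ₁ = c(m₂−c)/(m₁(M−2c)). -/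
noncomputable section
open Real Finset

namespace St16

lemma alg (m1 m2 c x y : ℝ) (hIc : m1 * x + m2 * y = c)
    (hsq : m1 ^ 2 * x * (1 - x) = m2 ^ 2 * y * (1 - y)) :
    m1 * x * ((m1 + m2) - 2 * c) = c * (m2 - c) ∧
      m2 * y * ((m1 + m2) - 2 * c) = c * (m1 - c) := by
  constructor
  · linear_combination hsq - (c - m1 * x + m2 * y - m2) * hIc
  · linear_combination -hsq - (c + m1 * x - m2 * y - m1) * hIc

lemma sin_sq_id (m1 m2 c a b : ℝ)
    (hIc : m1 * Real.sin a ^ 2 + m2 * Real.sin b ^ 2 = c)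
    (hF : m1 * Real.sin (2 * a) + m2 * Real.sin (2 * b) = 0) :
    m1 * Real.sin a ^ 2 * ((m1 + m2) - 2 * c) = c * (m2 - c) ∧
      m2 * Real.sin b ^ 2 * ((m1 + m2) - 2 * c) = c * (m1 - c) := by
  rw [Real.sin_two_mul, Real.sin_two_mul] at hF
  have hca := Real.cos_sq' a
  have hcb := Real.cos_sq' b
  have h2 : m1 * (Real.sin a * Real.cos a) = -(m2 * (Real.sin b * Real.cos b)) := by
    linear_combination hF / 2
  have hsq : m1 ^ 2 * Real.sin a ^ 2 * (1 - Real.sin a ^ 2)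
      = m2 ^ 2 * Real.sin b ^ 2 * (1 - Real.sin b ^ 2) := by
    calc m1 ^ 2 * Real.sin a ^ 2 * (1 - Real.sin a ^ 2)
        = (m1 * (Real.sin a * Real.cos a)) ^ 2 := by rw [← hca]; ring
      _ = (m2 * (Real.sin b * Real.cos b)) ^ 2 := by rw [h2]; ring
      _ = m2 ^ 2 * Real.sin b ^ 2 * (1 - Real.sin b ^ 2) := by rw [← hcb]; ring
  exact alg _ _ _ _ _ hIc hsq

lemma D_ne (m1 m2 c x y : ℝ) (h12 : m1 < m2) (hc : 0 < c)
    (h1 : m1 * x * ((m1 + m2) - 2 * c) = c * (m2 - c))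
    (h2 : m2 * y * ((m1 + m2) - 2 * c) = c * (m1 - c)) :
    (m1 + m2) - 2 * c ≠ 0 := by
  intro hD
  rw [hD, mul_zero] at h1 h2
  have hm2c : c * (m2 - c) > 0 := by nlinarith
  linarith [h1]

set_option maxHeartbeats 1000000 in
lemma set_eq (m1 m2 c : ℝ) (hm1 : 0 < m1) (h12 : m1 < m2) (hc : 0 < c)
    (s1 s2 : ℝ) (hs10 : 0 < s1) (hs11 : s1 < 1) (hs20 : 0 < s2) (hs21 : s2 < 1)
    (hIc : m1 * s1 + m2 * s2 = c)
    (hsq : m1 ^ 2 * s1 * (1 - s1) = m2 ^ 2 * s2 * (1 - s2)) :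
    {p : ℝ × ℝ | p.1 ∈ Set.Ioo 0 (π / 2) ∧ p.2 ∈ Set.Ioo p.1 (2 * π) ∧
        m1 * Real.sin p.1 ^ 2 + m2 * Real.sin p.2 ^ 2 = c ∧
        m1 * Real.sin (2 * p.1) + m2 * Real.sin (2 * p.2) = 0 ∧
        Real.sin (2 * p.1) ≠ 0} =
      {(Real.arcsin (Real.sqrt s1), π - Real.arcsin (Real.sqrt s2)),
       (Real.arcsin (Real.sqrt s1), 2 * π - Real.arcsin (Real.sqrt s2))} := by
  have hm2 : 0 < m2 := lt_trans hm1 h12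
  have hπ := Real.pi_pos
  have hs1n : (0:ℝ) ≤ s1 := hs10.le
  have hs2n : (0:ℝ) ≤ s2 := hs20.le
  have h1s1 : (0:ℝ) ≤ 1 - s1 := by linarith
  have h1s2 : (0:ℝ) ≤ 1 - s2 := by linarith
  have hsq1 : Real.sqrt s1 ^ 2 = s1 := Real.sq_sqrt hs1n
  have hsq2 : Real.sqrt s2 ^ 2 = s2 := Real.sq_sqrt hs2n
  have h1lt : Real.sqrt s1 < 1 := by
    have := Real.sqrt_lt_sqrt hs1n hs11; rwa [Real.sqrt_one] at this
  have h2lt : Real.sqrt s2 < 1 := by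
    have := Real.sqrt_lt_sqrt hs2n hs21; rwa [Real.sqrt_one] at this
  set a := Real.arcsin (Real.sqrt s1) with ha_def
  set x2 := Real.arcsin (Real.sqrt s2) with hx2_def
  have ha0 : 0 < a := Real.arcsin_pos.mpr (Real.sqrt_pos.mpr hs10)
  have ha1 : a < π / 2 := Real.arcsin_lt_pi_div_two.mpr h1lt
  have hx20 : 0 < x2 := Real.arcsin_pos.mpr (Real.sqrt_pos.mpr hs20)
  have hx21 : x2 < π / 2 := Real.arcsin_lt_pi_div_two.mpr h2lt
  have sin_a : Real.sin a = Real.sqrt s1 :=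
    Real.sin_arcsin (by linarith [Real.sqrt_nonneg s1]) h1lt.le
  have cos_a : Real.cos a = Real.sqrt (1 - s1) := by
    rw [ha_def, Real.cos_arcsin, hsq1]
  have sin_x2 : Real.sin x2 = Real.sqrt s2 :=
    Real.sin_arcsin (by linarith [Real.sqrt_nonneg s2]) h2lt.le
  have cos_x2 : Real.cos x2 = Real.sqrt (1 - s2) := by
    rw [hx2_def, Real.cos_arcsin, hsq2]
  -- key: m1 √s1 √(1-s1) = m2 √s2 √(1-s2)
  have key : m1 * (Real.sqrt s1 * Real.sqrt (1 - s1))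
      = m2 * (Real.sqrt s2 * Real.sqrt (1 - s2)) := by
    have hA : (m1 * (Real.sqrt s1 * Real.sqrt (1 - s1))) ^ 2
        = (m2 * (Real.sqrt s2 * Real.sqrt (1 - s2))) ^ 2 := by
      have e1 : (m1 * (Real.sqrt s1 * Real.sqrt (1 - s1))) ^ 2
          = m1 ^ 2 * s1 * (1 - s1) := by
        rw [mul_pow, mul_pow, hsq1, Real.sq_sqrt h1s1]; ring
      have e2 : (m2 * (Real.sqrt s2 * Real.sqrt (1 - s2))) ^ 2
          = m2 ^ 2 * s2 * (1 - s2) := by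
        rw [mul_pow, mul_pow, hsq2, Real.sq_sqrt h1s2]; ring
      rw [e1, e2]; exact hsq
    have hA1 : (0:ℝ) ≤ m1 * (Real.sqrt s1 * Real.sqrt (1 - s1)) := by positivity
    have hA2 : (0:ℝ) ≤ m2 * (Real.sqrt s2 * Real.sqrt (1 - s2)) := by positivity
    calc m1 * (Real.sqrt s1 * Real.sqrt (1 - s1))
        = Real.sqrt ((m1 * (Real.sqrt s1 * Real.sqrt (1 - s1))) ^ 2) :=
          (Real.sqrt_sq hA1).symm
      _ = Real.sqrt ((m2 * (Real.sqrt s2 * Real.sqrt (1 - s2))) ^ 2) := by rw [hA]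
      _ = m2 * (Real.sqrt s2 * Real.sqrt (1 - s2)) := Real.sqrt_sq hA2
  obtain ⟨f1, f2⟩ := alg m1 m2 c s1 s2 hIc hsq
  have hD : (m1 + m2) - 2 * c ≠ 0 := D_ne m1 m2 c s1 s2 h12 hc f1 f2
  ext ⟨t1, t2⟩
  simp only [Set.mem_setOf_eq, Set.mem_insert_iff, Set.mem_singleton_iff, Set.mem_Ioo,
    Prod.mk.injEq]
  constructor
  · rintro ⟨⟨ht10, ht11⟩, ⟨ht20, ht21⟩, hI, hF, hne⟩
    obtain ⟨e1, e2⟩ := sin_sq_id m1 m2 c t1 t2 hI hF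
    have hx : Real.sin t1 ^ 2 = s1 := by
      have h := e1.trans f1.symm
      exact mul_left_cancel₀ (ne_of_gt hm1) (mul_right_cancel₀ hD h)
    have hy : Real.sin t2 ^ 2 = s2 := by
      have h := e2.trans f2.symm
      exact mul_left_cancel₀ (ne_of_gt hm2) (mul_right_cancel₀ hD h)
    have hsin1 : 0 < Real.sin t1 :=
      Real.sin_pos_of_pos_of_lt_pi ht10 (by linarith)
    have hcos1 : 0 < Real.cos t1 := Real.cos_pos_of_mem_Ioo ⟨by linarith, ht11⟩
    have ht1eq : t1 = a := by
      have h1 : Real.sin t1 = Real.sqrt s1 := by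
        rw [← hx, Real.sqrt_sq hsin1.le]
      rw [ha_def, ← h1, Real.arcsin_sin (by linarith) ht11.le]
    -- sign facts for t2
    have h2t1 : 0 < Real.sin (2 * t1) := by
      rw [Real.sin_two_mul]; positivity
    have h2t2 : Real.sin (2 * t2) < 0 := by
      have hp : 0 < m1 * Real.sin (2 * t1) := mul_pos hm1 h2t1
      by_contra h
      push_neg at h
      have : 0 ≤ m2 * Real.sin (2 * t2) := mul_nonneg hm2.le h
      linarith
    rw [Real.sin_two_mul] at h2t2
    have hsin2ne : Real.sin t2 ≠ 0 := by
      intro h; rw [h] at h2t2; simp at h2t2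
    rcases hsin2ne.lt_or_gt with hneg | hpos
    · -- sin t2 < 0, cos t2 > 0, t2 ∈ (3π/2, 2π)
      right
      have hcpos : 0 < Real.cos t2 := by
        by_contra h
        push_neg at h
        have h9 : (0:ℝ) ≤ (-(2 * Real.sin t2)) * (-Real.cos t2) :=
          mul_nonneg (by linarith) (by linarith)
        have h10 : (-(2 * Real.sin t2)) * (-Real.cos t2) = 2 * Real.sin t2 * Real.cos t2 := by
          ring
        linarith
      have htgtpi : π < t2 := by
        by_contra h
        push_neg at h
        have := Real.sin_nonneg_of_nonneg_of_le_pi (by linarith : (0:ℝ) ≤ t2) h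
        linarith
      have ht32 : π + π / 2 < t2 := by
        by_contra h
        push_neg at h
        have := Real.cos_nonpos_of_pi_div_two_le_of_le (by linarith) h
        linarith
      have hsin_eq : Real.sin t2 = -Real.sqrt s2 := by
        have : Real.sqrt s2 = -Real.sin t2 := by
          rw [← hy, Real.sqrt_sq_eq_abs, abs_of_neg hneg]
        linarith
      have harc : Real.arcsin (Real.sin (t2 - 2 * π)) = t2 - 2 * π :=
        Real.arcsin_sin (by linarith) (by linarith)
      rw [Real.sin_sub_two_pi, hsin_eq, Real.arcsin_neg, ← hx2_def] at harc
      exact ⟨ht1eq, by linarith⟩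
    · -- sin t2 > 0, cos t2 < 0, t2 ∈ (π/2, π)
      left
      have hcneg : Real.cos t2 < 0 := by
        by_contra h
        push_neg at h
        have h9 : (0:ℝ) ≤ 2 * Real.sin t2 * Real.cos t2 :=
          mul_nonneg (by linarith) h
        linarith
      have htltpi : t2 < π := by
        by_contra h
        push_neg at h
        have h0 := Real.sin_nonneg_of_nonneg_of_le_pi
          (by linarith : (0:ℝ) ≤ t2 - π) (by linarith)
        rw [Real.sin_sub_pi] at h0
        linarith
      have htgt : π / 2 < t2 := by
        by_contra h
        push_neg at h
        have := Real.cos_nonneg_of_mem_Icc ⟨by linarith, h⟩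
        linarith
      have hsin_eq : Real.sin t2 = Real.sqrt s2 := by
        rw [← hy, Real.sqrt_sq hpos.le]
      have harc : Real.arcsin (Real.sin (π - t2)) = π - t2 :=
        Real.arcsin_sin (by linarith) (by linarith)
      rw [Real.sin_pi_sub, hsin_eq, ← hx2_def] at harc
      exact ⟨ht1eq, by linarith⟩
  · have hIone : m1 * Real.sin a ^ 2 + m2 * Real.sin (π - x2) ^ 2 = c := by
      rw [Real.sin_pi_sub, sin_a, sin_x2]
      linear_combination hIc + m1 * hsq1 + m2 * hsq2
    have hF1 : m1 * Real.sin (2 * a) + m2 * Real.sin (2 * (π - x2)) = 0 := by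
      rw [Real.sin_two_mul, Real.sin_two_mul, Real.sin_pi_sub, Real.cos_pi_sub,
        sin_a, cos_a, sin_x2, cos_x2]
      linear_combination 2 * key
    have hsin2a : 0 < Real.sin (2 * a) := by
      rw [Real.sin_two_mul, sin_a, cos_a]
      have := Real.sqrt_pos.mpr hs10
      have := Real.sqrt_pos.mpr (show (0:ℝ) < 1 - s1 by linarith)
      positivity
    have hsin2pi_sub : Real.sin (2 * π - x2) = -Real.sin x2 := by
      rw [Real.sin_sub, Real.sin_two_pi, Real.cos_two_pi]; ring
    have hcos2pi_sub : Real.cos (2 * π - x2) = Real.cos x2 := by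
      rw [Real.cos_sub, Real.sin_two_pi, Real.cos_two_pi]; ring
    rintro (⟨h1, h2⟩ | ⟨h1, h2⟩) <;> subst h1 <;> subst h2
    · refine ⟨⟨ha0, ha1⟩, ⟨by linarith, by linarith⟩, hIone, hF1, ne_of_gt hsin2a⟩
    · refine ⟨⟨ha0, ha1⟩, ⟨by linarith, by linarith⟩, ?_, ?_, ne_of_gt hsin2a⟩
      · rw [hsin2pi_sub, sin_a, sin_x2]
        linear_combination hIc + m1 * hsq1 + m2 * hsq2
      · rw [Real.sin_two_mul, Real.sin_two_mul, hsin2pi_sub, hcos2pi_sub,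
          sin_a, cos_a, sin_x2, cos_x2]
        linear_combination 2 * key


lemma empty_case (m1 m2 c : ℝ) (hm1 : 0 < m1) (h12 : m1 < m2) (hc : 0 < c)
    (hnot : c ∉ Set.Ioo 0 m1 ∪ Set.Ioo m2 (m1 + m2)) :
    {p : ℝ × ℝ | p.1 ∈ Set.Ioo 0 (π / 2) ∧ p.2 ∈ Set.Ioo p.1 (2 * π) ∧
        m1 * Real.sin p.1 ^ 2 + m2 * Real.sin p.2 ^ 2 = c ∧
        m1 * Real.sin (2 * p.1) + m2 * Real.sin (2 * p.2) = 0 ∧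
        Real.sin (2 * p.1) ≠ 0} = ∅ := by
  have hm2 : 0 < m2 := lt_trans hm1 h12
  have hπ := Real.pi_pos
  ext ⟨t1, t2⟩
  simp only [Set.mem_setOf_eq, Set.mem_Ioo, Set.mem_empty_iff_false, iff_false, not_and]
  rintro ⟨ht10, ht11⟩ ⟨ht20, ht21⟩ hI hF hne
  obtain ⟨e1, e2⟩ := sin_sq_id m1 m2 c t1 t2 hI hF
  have hsin1 : 0 < Real.sin t1 := Real.sin_pos_of_pos_of_lt_pi ht10 (by linarith)
  have hsin1lt : Real.sin t1 < 1 := by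
    have h := Real.strictMonoOn_sin ⟨by linarith, ht11.le⟩
      ⟨by linarith, le_refl _⟩ ht11
    rwa [Real.sin_pi_div_two] at h
  have hx0 : 0 < Real.sin t1 ^ 2 := by positivity
  have hx1 : Real.sin t1 ^ 2 < 1 := by nlinarith
  have hsin2ne : Real.sin t2 ≠ 0 := by
    intro h
    have hz : Real.sin (2 * t2) = 0 := by rw [Real.sin_two_mul, h]; ring
    rw [hz] at hF
    apply hne
    have : m1 * Real.sin (2 * t1) = 0 := by linarith
    rcases mul_eq_zero.mp this with h' | h'
    · exact absurd h' (ne_of_gt hm1)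
    · exact h'
  have hy0 : 0 < Real.sin t2 ^ 2 := pow_two_pos_of_ne_zero hsin2ne
  have hy1 : Real.sin t2 ^ 2 ≤ 1 := Real.sin_sq_le_one t2
  have hcM : c < m1 + m2 := by nlinarith
  simp only [Set.mem_union, Set.mem_Ioo, not_or, not_and, not_lt] at hnot
  have hcm1 : m1 ≤ c := hnot.1 hc
  have hcm2 : c ≤ m2 := by
    by_contra h
    push_neg at h
    exact absurd hcM (not_lt.mpr (hnot.2 h))
  rcases lt_trichotomy ((m1 + m2) - 2 * c) 0 with hD | hD | hD
  · -- e1 : m1 x D = c (m2 - c) ≥ 0, LHS < 0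
    have hl : m1 * Real.sin t1 ^ 2 * ((m1 + m2) - 2 * c) < 0 :=
      mul_neg_of_pos_of_neg (by positivity) hD
    have hr : 0 ≤ c * (m2 - c) := mul_nonneg hc.le (by linarith)
    linarith [e1]
  · exact D_ne m1 m2 c (Real.sin t1 ^ 2) (Real.sin t2 ^ 2) h12 hc e1 e2 hD
  · have hl : 0 < m2 * Real.sin t2 ^ 2 * ((m1 + m2) - 2 * c) :=
      mul_pos (by positivity) hD
    have hr : c * (m1 - c) ≤ 0 :=
      mul_nonpos_of_nonneg_of_nonpos hc.le (by linarith)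
    linarith [e2]

end St16

/-- Count of two-body geodesic central configurations on `S¹_xz` with
moment of inertia `c`, for unequal masses. -/
theorem statement16 (m1 m2 : ℝ) (hm1 : 0 < m1) (h12 : m1 < m2) (c : ℝ) (hc : 0 < c) :
    ((c ∈ Set.Ioo 0 m1 ∪ Set.Ioo m2 (m1 + m2) →
      Set.ncard {p : ℝ × ℝ | p.1 ∈ Set.Ioo 0 (π / 2) ∧ p.2 ∈ Set.Ioo p.1 (2 * π) ∧
        m1 * Real.sin p.1 ^ 2 + m2 * Real.sin p.2 ^ 2 = c ∧
        m1 * Real.sin (2 * p.1) + m2 * Real.sin (2 * p.2) = 0 ∧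
        Real.sin (2 * p.1) ≠ 0} = 2) ∧
     (c ∉ Set.Ioo 0 m1 ∪ Set.Ioo m2 (m1 + m2) →
      {p : ℝ × ℝ | p.1 ∈ Set.Ioo 0 (π / 2) ∧ p.2 ∈ Set.Ioo p.1 (2 * π) ∧
        m1 * Real.sin p.1 ^ 2 + m2 * Real.sin p.2 ^ 2 = c ∧
        m1 * Real.sin (2 * p.1) + m2 * Real.sin (2 * p.2) = 0 ∧
        Real.sin (2 * p.1) ≠ 0} = ∅) ∧
     (∀ p : ℝ × ℝ, p.1 ∈ Set.Ioo 0 (π / 2) → p.2 ∈ Set.Ioo p.1 (2 * π) →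
        m1 * Real.sin p.1 ^ 2 + m2 * Real.sin p.2 ^ 2 = c →
        m1 * Real.sin (2 * p.1) + m2 * Real.sin (2 * p.2) = 0 →
        Real.sin (2 * p.1) ≠ 0 →
        Real.sin p.2 ^ 2 = c * (m1 - c) / (m2 * ((m1 + m2) - 2 * c)) ∧
        Real.sin p.1 ^ 2 = c * (m2 - c) / (m1 * ((m1 + m2) - 2 * c)))) := by
  have hm2 : 0 < m2 := lt_trans hm1 h12
  have hm1' : m1 ≠ 0 := ne_of_gt hm1
  have hm2' : m2 ≠ 0 := ne_of_gt hm2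
  refine ⟨?_, St16.empty_case m1 m2 c hm1 h12 hc, ?_⟩
  · intro hmem
    rcases hmem with h | h
    · obtain ⟨hc0, hcm1⟩ := h
      have hD : 0 < (m1 + m2) - 2 * c := by linarith
      have hD' : (m1 + m2) - 2 * c ≠ 0 := ne_of_gt hD
      set s1 := c * (m2 - c) / (m1 * ((m1 + m2) - 2 * c)) with hs1def
      set s2 := c * (m1 - c) / (m2 * ((m1 + m2) - 2 * c)) with hs2def
      have hden1 : 0 < m1 * ((m1 + m2) - 2 * c) := mul_pos hm1 hD
      have hden2 : 0 < m2 * ((m1 + m2) - 2 * c) := mul_pos hm2 hD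
      have hs10 : 0 < s1 := div_pos (mul_pos hc (by linarith)) hden1
      have hs20 : 0 < s2 := div_pos (mul_pos hc (by linarith)) hden2
      have hs11 : s1 < 1 := by
        rw [hs1def, div_lt_one hden1]
        nlinarith [mul_pos (show (0:ℝ) < m1 - c by linarith)
          (show (0:ℝ) < m1 + m2 - c by linarith)]
      have hs21 : s2 < 1 := by
        rw [hs2def, div_lt_one hden2]
        nlinarith [mul_pos (show (0:ℝ) < m2 - c by linarith)
          (show (0:ℝ) < m1 + m2 - c by linarith)]
      have hIc : m1 * s1 + m2 * s2 = c := by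
        have : m1 + m2 - c * 2 ≠ 0 := by rwa [mul_comm c 2]
        rw [hs1def, hs2def]; field_simp; ring
      have hsq : m1 ^ 2 * s1 * (1 - s1) = m2 ^ 2 * s2 * (1 - s2) := by
        have : m1 + m2 - c * 2 ≠ 0 := by rwa [mul_comm c 2]
        rw [hs1def, hs2def]; field_simp; ring
      rw [St16.set_eq m1 m2 c hm1 h12 hc s1 s2 hs10 hs11 hs20 hs21 hIc hsq]
      refine Set.ncard_pair ?_
      intro hEq
      have h2 := congrArg Prod.snd hEq
      simp only at h2
      linarith [Real.pi_pos]
    · obtain ⟨hc0, hcm1⟩ := h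
      have hD : 0 < 2 * c - (m1 + m2) := by linarith
      have hD' : 2 * c - (m1 + m2) ≠ 0 := ne_of_gt hD
      set s1 := c * (c - m2) / (m1 * (2 * c - (m1 + m2))) with hs1def
      set s2 := c * (c - m1) / (m2 * (2 * c - (m1 + m2))) with hs2def
      have hden1 : 0 < m1 * (2 * c - (m1 + m2)) := mul_pos hm1 hD
      have hden2 : 0 < m2 * (2 * c - (m1 + m2)) := mul_pos hm2 hD
      have hs10 : 0 < s1 := div_pos (mul_pos hc (by linarith)) hden1
      have hs20 : 0 < s2 := div_pos (mul_pos hc (by linarith)) hden2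
      have hs11 : s1 < 1 := by
        rw [hs1def, div_lt_one hden1]
        nlinarith [mul_pos (show (0:ℝ) < c - m1 by linarith)
          (show (0:ℝ) < m1 + m2 - c by linarith)]
      have hs21 : s2 < 1 := by
        rw [hs2def, div_lt_one hden2]
        nlinarith [mul_pos (show (0:ℝ) < c - m2 by linarith)
          (show (0:ℝ) < m1 + m2 - c by linarith)]
      have hIc : m1 * s1 + m2 * s2 = c := by
        have : c * 2 - (m1 + m2) ≠ 0 := by rwa [mul_comm c 2]
        rw [hs1def, hs2def]; field_simp; ring
      have hsq : m1 ^ 2 * s1 * (1 - s1) = m2 ^ 2 * s2 * (1 - s2) := by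
        have : c * 2 - (m1 + m2) ≠ 0 := by rwa [mul_comm c 2]
        rw [hs1def, hs2def]; field_simp; ring
      rw [St16.set_eq m1 m2 c hm1 h12 hc s1 s2 hs10 hs11 hs20 hs21 hIc hsq]
      refine Set.ncard_pair ?_
      intro hEq
      have h2 := congrArg Prod.snd hEq
      simp only at h2
      linarith [Real.pi_pos]
  · intro p hp1 hp2 hI hF hne
    obtain ⟨e1, e2⟩ := St16.sin_sq_id m1 m2 c p.1 p.2 hI hF
    have hD : (m1 + m2) - 2 * c ≠ 0 := St16.D_ne m1 m2 c _ _ h12 hc e1 e2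
    constructor
    · rw [eq_div_iff (mul_ne_zero hm2' hD)]; linear_combination e2
    · rw [eq_div_iff (mul_ne_zero hm1' hD)]; linear_combination e1
end
end

section
/- Let m > 0, m₁ = m₂ = m, and c = m. Then the set of pairs (θ₁,θ₂) with θ₁ ∈ (0, π/2), θ₂ ∈ (θ₁, 2π), m sin²θ₁ + m sin²θ₂ = m, m sin 2θ₁ + m sin 2θ₂ = 0, and sin 2θ₁ ≠ 0 equals {(θ, θ+π/2) : θ ∈ (0,π/2)} ∪ {(θ, θ+3π/2) : θ ∈ (0,π/2)}; in particular this set is infinite, and for every such pair the two bodies are at spherical distance π/2, i.e. q₁·q₂ = cos(θ₂−θ₁) = 0, so that U = m² cot(π/2) = 0 on the whole set. -/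
noncomputable section
open Real Finset

lemma cos_key (θ₁ θ₂ : ℝ) (h1 : Real.sin θ₁ ^ 2 + Real.sin θ₂ ^ 2 = 1)
    (h2 : Real.sin (2 * θ₁) + Real.sin (2 * θ₂) = 0) :
    Real.cos (θ₂ - θ₁) = 0 := by
  have p1 := Real.sin_sq_add_cos_sq θ₁
  have p2 := Real.sin_sq_add_cos_sq θ₂
  rw [Real.sin_two_mul, Real.sin_two_mul] at h2
  rw [Real.cos_sub]
  nlinarith [sq_nonneg (Real.cos θ₂ * Real.cos θ₁ + Real.sin θ₂ * Real.sin θ₁),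
    sq_nonneg (Real.cos θ₂ * Real.cos θ₁ - Real.sin θ₂ * Real.sin θ₁)]

lemma cos_zero_cases (x : ℝ) (h0 : 0 < x) (h2 : x < 2 * π) (hc : Real.cos x = 0) :
    x = π / 2 ∨ x = 3 * π / 2 := by
  rw [Real.cos_eq_zero_iff] at hc
  obtain ⟨k, hk⟩ := hc
  have hπ := Real.pi_pos
  have hk0 : (0 : ℝ) < 2 * k + 1 := by
    by_contra h; push_neg at h; nlinarith
  have hk4 : (2 * (k : ℝ) + 1) < 4 := by
    by_contra h; push_neg at h; nlinarith
  have hkint : k = 0 ∨ k = 1 := by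
    have ha : (-1:ℝ) < k := by linarith
    have hb : -1 < k := by exact_mod_cast ha
    have hcr : (k:ℝ) < 2 := by linarith
    have hd : k < 2 := by exact_mod_cast hcr
    omega
  rcases hkint with h | h <;> subst h <;> simp at hk <;> rw [hk] <;> [left; right] <;> ring

/-- For two equal masses `m` with `c = m`, the set of geodesic central
configurations on `S¹_xz` is an infinite set on which the bodies sit at distance `π/2`
and `U = 0`. -/
theorem statement17 (m : ℝ) (hm : 0 < m) :
    ({p : ℝ × ℝ | p.1 ∈ Set.Ioo 0 (π / 2) ∧ p.2 ∈ Set.Ioo p.1 (2 * π) ∧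
        m * Real.sin p.1 ^ 2 + m * Real.sin p.2 ^ 2 = m ∧
        m * Real.sin (2 * p.1) + m * Real.sin (2 * p.2) = 0 ∧
        Real.sin (2 * p.1) ≠ 0} =
      ({p : ℝ × ℝ | ∃ θ ∈ Set.Ioo 0 (π / 2), p = (θ, θ + π / 2)} ∪
       {p : ℝ × ℝ | ∃ θ ∈ Set.Ioo 0 (π / 2), p = (θ, θ + 3 * π / 2)})) ∧
    Set.Infinite {p : ℝ × ℝ | p.1 ∈ Set.Ioo 0 (π / 2) ∧ p.2 ∈ Set.Ioo p.1 (2 * π) ∧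
        m * Real.sin p.1 ^ 2 + m * Real.sin p.2 ^ 2 = m ∧
        m * Real.sin (2 * p.1) + m * Real.sin (2 * p.2) = 0 ∧
        Real.sin (2 * p.1) ≠ 0} ∧
    (∀ p : ℝ × ℝ, p.1 ∈ Set.Ioo 0 (π / 2) → p.2 ∈ Set.Ioo p.1 (2 * π) →
      m * Real.sin p.1 ^ 2 + m * Real.sin p.2 ^ 2 = m →
      m * Real.sin (2 * p.1) + m * Real.sin (2 * p.2) = 0 →
      Real.sin (2 * p.1) ≠ 0 →
      Real.cos (p.2 - p.1) = 0 ∧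
      m * m * (Real.cos (Real.arccos (Real.cos (p.2 - p.1))) /
        Real.sin (Real.arccos (Real.cos (p.2 - p.1)))) = 0) := by
  have hπ := Real.pi_pos
  have h3 : ∀ p : ℝ × ℝ, p.1 ∈ Set.Ioo 0 (π / 2) → p.2 ∈ Set.Ioo p.1 (2 * π) →
      m * Real.sin p.1 ^ 2 + m * Real.sin p.2 ^ 2 = m →
      m * Real.sin (2 * p.1) + m * Real.sin (2 * p.2) = 0 →
      Real.sin (2 * p.1) ≠ 0 →
      Real.cos (p.2 - p.1) = 0 ∧
      m * m * (Real.cos (Real.arccos (Real.cos (p.2 - p.1))) /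
        Real.sin (Real.arccos (Real.cos (p.2 - p.1)))) = 0 := by
    rintro ⟨θ₁, θ₂⟩ h1 h2 he1 he2 hne
    have hm' : m ≠ 0 := ne_of_gt hm
    have he1' : Real.sin θ₁ ^ 2 + Real.sin θ₂ ^ 2 = 1 := by
      have h : m * (Real.sin θ₁ ^ 2 + Real.sin θ₂ ^ 2) = m * 1 := by ring_nf; ring_nf at he1; linarith
      exact mul_left_cancel₀ hm' h
    have he2' : Real.sin (2 * θ₁) + Real.sin (2 * θ₂) = 0 := by
      have h : m * (Real.sin (2 * θ₁) + Real.sin (2 * θ₂)) = m * 0 := by ring_nf; ring_nf at he2; linarith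
      exact mul_left_cancel₀ hm' h
    have hc := cos_key θ₁ θ₂ he1' he2'
    refine ⟨hc, ?_⟩
    simp only [hc, Real.arccos_zero, Real.cos_pi_div_two]
    simp
  have hset : ({p : ℝ × ℝ | p.1 ∈ Set.Ioo 0 (π / 2) ∧ p.2 ∈ Set.Ioo p.1 (2 * π) ∧
        m * Real.sin p.1 ^ 2 + m * Real.sin p.2 ^ 2 = m ∧
        m * Real.sin (2 * p.1) + m * Real.sin (2 * p.2) = 0 ∧
        Real.sin (2 * p.1) ≠ 0} =
      ({p : ℝ × ℝ | ∃ θ ∈ Set.Ioo 0 (π / 2), p = (θ, θ + π / 2)} ∪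
       {p : ℝ × ℝ | ∃ θ ∈ Set.Ioo 0 (π / 2), p = (θ, θ + 3 * π / 2)})) := by
    ext ⟨θ₁, θ₂⟩
    constructor
    · rintro ⟨h1, h2, he1, he2, hne⟩
      have hc := (h3 (θ₁, θ₂) h1 h2 he1 he2 hne).1
      have hx0 : 0 < θ₂ - θ₁ := by have := h2.1; simp at this ⊢; linarith
      have hx2 : θ₂ - θ₁ < 2 * π := by
        have ha := h2.2; have hb := h1.1; simp at *; linarith
      rcases cos_zero_cases _ hx0 hx2 hc with h | h
      · left; exact ⟨θ₁, h1, by simp [Prod.ext_iff]; linarith⟩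
      · right; exact ⟨θ₁, h1, by simp [Prod.ext_iff]; linarith⟩
    · have hsinne : ∀ θ : ℝ, θ ∈ Set.Ioo 0 (π / 2) → Real.sin (2 * θ) ≠ 0 := by
        rintro θ ⟨hθ0, hθ1⟩
        exact ne_of_gt (Real.sin_pos_of_pos_of_lt_pi (by linarith) (by linarith))
      rintro (⟨θ₁, hθ, heq⟩ | ⟨θ₁, hθ, heq⟩) <;> rw [Prod.mk.injEq] at heq <;>
          obtain ⟨rfl, rfl⟩ := heq
      · obtain ⟨hθ0, hθ1⟩ := hθ
        refine ⟨⟨hθ0, hθ1⟩, ⟨by linarith, by linarith⟩, ?_, ?_, hsinne θ₁ ⟨hθ0, hθ1⟩⟩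
        · simp only [Real.sin_add_pi_div_two]
          have := Real.sin_sq_add_cos_sq θ₁
          ring_nf; nlinarith
        · have e : 2 * (θ₁ + π / 2) = 2 * θ₁ + π := by ring
          rw [e, Real.sin_add_pi]; ring
      · obtain ⟨hθ0, hθ1⟩ := hθ
        refine ⟨⟨hθ0, hθ1⟩, ⟨by linarith, by linarith⟩, ?_, ?_, hsinne θ₁ ⟨hθ0, hθ1⟩⟩
        · have e : θ₁ + 3 * π / 2 = (θ₁ + π / 2) + π := by ring
          rw [e, Real.sin_add_pi, Real.sin_add_pi_div_two]
          have := Real.sin_sq_add_cos_sq θ₁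
          ring_nf; nlinarith
        · have e : 2 * (θ₁ + 3 * π / 2) = (2 * θ₁ + π) + 2 * π := by ring
          rw [e, Real.sin_add_two_pi, Real.sin_add_pi]; ring
  refine ⟨hset, ?_, h3⟩
  rw [hset]
  apply Set.Infinite.mono Set.subset_union_left
  have himg : {p : ℝ × ℝ | ∃ θ ∈ Set.Ioo 0 (π / 2), p = (θ, θ + π / 2)} =
      (fun θ : ℝ => (θ, θ + π / 2)) '' Set.Ioo 0 (π / 2) := by
    ext p; simp [eq_comm]
  rw [himg]
  apply Set.Infinite.image
  · intro a _ b _ h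
    exact (Prod.ext_iff.1 h).1
  · exact Set.Ioo_infinite (by linarith)
end
end

section
/- Let m > 0, r ∈ (0,1), and z ∈ ℝ with r² + z² = 1, and consider three equal masses m₁ = m₂ = m₃ = m at the Lagrangian configuration qⱼ = (r cos(2πj/3), r sin(2πj/3), z, 0), j = 1,2,3, on S³. Then q is a central configuration: ∇_{qᵢ}U(q) = λ∇_{qᵢ}I(q) for all i = 1,2,3, where λ = −m/(2√3 · r³ · (1 − 3r²/4)^{3/2}) < 0, the mutual distances all equal d with cos d = 1 − 3r²/2 and sin³ d = 3√3 r³(1 − 3r²/4)^{3/2}. -/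
noncomputable section
open Real Finset

/-- Lagrangian (equilateral) central configurations of three equal
masses on `S²_xyz ⊂ S³`, with the explicit value of `λ` and of the mutual distances. -/
theorem statement19 (m r z : ℝ) (hm : 0 < m) (hr : r ∈ Set.Ioo (0 : ℝ) 1)
    (hrz : r ^ 2 + z ^ 2 = 1) :
    (∀ i : Fin 3,
      gradUS (fun _ => m)
        (fun j : Fin 3 =>
          (![r * Real.cos (2 * π * (j.1 + 1) / 3), r * Real.sin (2 * π * (j.1 + 1) / 3),
             z, 0] : V4)) i =
      (-m / (2 * Real.sqrt 3 * r ^ 3 * (1 - 3 * r ^ 2 / 4) ^ ((3 : ℝ) / 2))) •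
        gradIS (fun _ => m)
          (fun j : Fin 3 =>
            (![r * Real.cos (2 * π * (j.1 + 1) / 3), r * Real.sin (2 * π * (j.1 + 1) / 3),
               z, 0] : V4)) i) ∧
    (-m / (2 * Real.sqrt 3 * r ^ 3 * (1 - 3 * r ^ 2 / 4) ^ ((3 : ℝ) / 2)) < 0) ∧
    (∀ i j : Fin 3, i ≠ j →
      Real.cos (dS (![r * Real.cos (2 * π * (i.1 + 1) / 3),
          r * Real.sin (2 * π * (i.1 + 1) / 3), z, 0] : V4)
        (![r * Real.cos (2 * π * (j.1 + 1) / 3),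
          r * Real.sin (2 * π * (j.1 + 1) / 3), z, 0] : V4)) = 1 - 3 * r ^ 2 / 2 ∧
      Real.sin (dS (![r * Real.cos (2 * π * (i.1 + 1) / 3),
          r * Real.sin (2 * π * (i.1 + 1) / 3), z, 0] : V4)
        (![r * Real.cos (2 * π * (j.1 + 1) / 3),
          r * Real.sin (2 * π * (j.1 + 1) / 3), z, 0] : V4)) ^ 3 =
        3 * Real.sqrt 3 * r ^ 3 * (1 - 3 * r ^ 2 / 4) ^ ((3 : ℝ) / 2)) := by
  obtain ⟨hr0, hr1⟩ := hr
  have h3 : Real.sqrt 3 * Real.sqrt 3 = 3 := Real.mul_self_sqrt (by norm_num)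
  have h3pos : (0:ℝ) < Real.sqrt 3 := Real.sqrt_pos.mpr (by norm_num)
  have hu : (0:ℝ) < 1 - 3 * r ^ 2 / 4 := by nlinarith
  have hz2 : z ^ 2 = 1 - r ^ 2 := by linarith
  set u : ℝ := 1 - 3 * r ^ 2 / 4 with hu_def
  set Q : Fin 3 → V4 := fun j : Fin 3 =>
      (![r * Real.cos (2 * π * (j.1 + 1) / 3), r * Real.sin (2 * π * (j.1 + 1) / 3),
         z, 0] : V4) with hQdef
  -- trig values
  have hc0 : Real.cos (2 * π * ((0:ℝ) + 1) / 3) = -(1/2) := by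
    rw [show (2 * π * ((0:ℝ) + 1) / 3 : ℝ) = π - π/3 by ring, Real.cos_pi_sub,
      Real.cos_pi_div_three]
  have hs0 : Real.sin (2 * π * ((0:ℝ) + 1) / 3) = Real.sqrt 3 / 2 := by
    rw [show (2 * π * ((0:ℝ) + 1) / 3 : ℝ) = π - π/3 by ring, Real.sin_pi_sub,
      Real.sin_pi_div_three]
  have hc1 : Real.cos (2 * π * ((1:ℝ) + 1) / 3) = -(1/2) := by
    rw [show (2 * π * ((1:ℝ) + 1) / 3 : ℝ) = π/3 + π by ring, Real.cos_add_pi,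
      Real.cos_pi_div_three]
  have hs1 : Real.sin (2 * π * ((1:ℝ) + 1) / 3) = -(Real.sqrt 3 / 2) := by
    rw [show (2 * π * ((1:ℝ) + 1) / 3 : ℝ) = π/3 + π by ring, Real.sin_add_pi,
      Real.sin_pi_div_three]
  have hc2 : Real.cos (2 * π * ((2:ℝ) + 1) / 3) = 1 := by
    rw [show (2 * π * ((2:ℝ) + 1) / 3 : ℝ) = 2 * π by ring, Real.cos_two_pi]
  have hs2 : Real.sin (2 * π * ((2:ℝ) + 1) / 3) = 0 := by
    rw [show (2 * π * ((2:ℝ) + 1) / 3 : ℝ) = 2 * π by ring, Real.sin_two_pi]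
  have hc0' : Real.cos (2 * π / 3) = -(1/2) := by
    rw [show (2 * π / 3 : ℝ) = π - π/3 by ring, Real.cos_pi_sub, Real.cos_pi_div_three]
  have hs0' : Real.sin (2 * π / 3) = Real.sqrt 3 / 2 := by
    rw [show (2 * π / 3 : ℝ) = π - π/3 by ring, Real.sin_pi_sub, Real.sin_pi_div_three]
  have hc1' : Real.cos (2 * π * 2 / 3) = -(1/2) := by
    rw [show (2 * π * 2 / 3 : ℝ) = π/3 + π by ring, Real.cos_add_pi, Real.cos_pi_div_three]
  have hs1' : Real.sin (2 * π * 2 / 3) = -(Real.sqrt 3 / 2) := by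
    rw [show (2 * π * 2 / 3 : ℝ) = π/3 + π by ring, Real.sin_add_pi, Real.sin_pi_div_three]
  have hc2' : Real.cos (2 * π * 3 / 3) = 1 := by
    rw [show (2 * π * 3 / 3 : ℝ) = 2 * π by ring, Real.cos_two_pi]
  have hs2' : Real.sin (2 * π * 3 / 3) = 0 := by
    rw [show (2 * π * 3 / 3 : ℝ) = 2 * π by ring, Real.sin_two_pi]
  -- dot products
  have hQQ : ∀ i : Fin 3, dot4 (Q i) (Q i) = 1 := by
    intro i
    fin_cases i <;>
      simp only [hQdef, dot4, Matrix.cons_val_zero, Matrix.cons_val_one, Matrix.head_cons,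
        Matrix.cons_val_two, Matrix.tail_cons, Matrix.cons_val_three, Fin.val_zero, Fin.val_one,
        Fin.val_two, Nat.cast_ofNat, Nat.cast_zero, Nat.cast_one, Fin.isValue, hc0, hs0, hc1,
        hs1, hc2, hs2] <;>
      first
        | linear_combination hrz
        | linear_combination hrz + (r^2/4) * h3
  have hdot : ∀ i j : Fin 3, i ≠ j → dot4 (Q i) (Q j) = 1 - 3 * r ^ 2 / 2 := by
    intro i j hij
    fin_cases i <;> fin_cases j <;> (try exact absurd rfl hij) <;>
      simp only [hQdef, dot4, Matrix.cons_val_zero, Matrix.cons_val_one, Matrix.head_cons,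
        Matrix.cons_val_two, Matrix.tail_cons, Matrix.cons_val_three, Fin.val_zero, Fin.val_one,
        Fin.val_two, Nat.cast_ofNat, Nat.cast_zero, Nat.cast_one, Fin.isValue, hc0, hs0, hc1,
        hs1, hc2, hs2] <;>
      first
        | linear_combination hrz
        | linear_combination hrz - (r^2/4) * h3
  -- powers
  have hsu : Real.sqrt u ^ 3 = u ^ ((3:ℝ)/2) := by
    rw [show Real.sqrt u = u ^ ((1:ℝ)/2) from Real.sqrt_eq_rpow u,
      ← Real.rpow_natCast (u ^ ((1:ℝ)/2)) 3, ← Real.rpow_mul hu.le]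
    norm_num
  have hupos : (0:ℝ) < u ^ ((3:ℝ)/2) := Real.rpow_pos_of_pos hu _
  -- distances
  have key : ∀ i j : Fin 3, i ≠ j →
      Real.cos (dS (Q i) (Q j)) = 1 - 3 * r ^ 2 / 2 ∧
      Real.sin (dS (Q i) (Q j)) ^ 3 = 3 * Real.sqrt 3 * r ^ 3 * u ^ ((3:ℝ)/2) := by
    intro i j hij
    have hd : dS (Q i) (Q j) = Real.arccos (1 - 3 * r ^ 2 / 2) := by
      rw [dS, hdot i j hij]
    constructor
    · rw [hd, Real.cos_arccos (by nlinarith) (by nlinarith)]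
    · rw [hd, Real.sin_arccos,
        show (1 - (1 - 3 * r ^ 2 / 2) ^ 2 : ℝ) = 3 * r ^ 2 * u by rw [hu_def]; ring,
        Real.sqrt_mul (by positivity) u, Real.sqrt_mul (by norm_num : (0:ℝ) ≤ 3),
        Real.sqrt_sq hr0.le]
      have h33 : Real.sqrt 3 ^ 3 = 3 * Real.sqrt 3 := by
        linear_combination Real.sqrt 3 * h3
      rw [mul_pow, mul_pow, h33, hsu]; try ring
  have hzero : ∀ i : Fin 3,
      (m * m / Real.sin (dS (Q i) (Q i)) ^ 3) • (Q i - Real.cos (dS (Q i) (Q i)) • Q i) = 0 := by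
    intro i
    have hc : Real.cos (dS (Q i) (Q i)) = 1 := by
      rw [dS, hQQ i, Real.arccos_one, Real.cos_zero]
    rw [hc, one_smul, sub_self, smul_zero]
  refine ⟨?_, ?_, ?_⟩
  · intro i
    have hrel : m * m / (3 * Real.sqrt 3 * r ^ 3 * u ^ ((3:ℝ)/2))
        = (-m / (2 * Real.sqrt 3 * r ^ 3 * u ^ ((3:ℝ)/2))) * (-(2 * m) / 3) := by
      rw [div_mul_div_comm]
      rw [div_eq_div_iff (by positivity) (by positivity)]
      ring
    simp only [gradUS, gradIS]
    rw [Finset.sum_erase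
        (f := fun x => (m * m / Real.sin (dS (Q i) (Q x)) ^ 3) •
          (Q x - Real.cos (dS (Q i) (Q x)) • Q i)) _ (hzero i),
      Fin.sum_univ_three]
    fin_cases i
    · simp only [Fin.zero_eta, Fin.mk_one, Fin.reduceFinMk, Fin.isValue]
      rw [hzero, (key 0 1 (by decide)).1, (key 0 1 (by decide)).2,
        (key 0 2 (by decide)).1, (key 0 2 (by decide)).2, hrel, mul_smul, mul_smul,
        zero_add, ← smul_add]
      refine congrArg _ ?_
      funext k
      fin_cases k <;>
        simp [hQdef, Pi.smul_apply, Pi.sub_apply, smul_eq_mul, hz2, hc0, hs0, hc1, hs1,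
          hc2, hs2, hc0', hs0', hc1', hs1', hc2', hs2'] <;>
        first
          | ring1
          | linear_combination (m * z * r ^ 2 / 2) * h3
          | linear_combination (-(m * z * r ^ 2 / 2)) * h3
    · simp only [Fin.zero_eta, Fin.mk_one, Fin.reduceFinMk, Fin.isValue]
      rw [hzero, (key 1 0 (by decide)).1, (key 1 0 (by decide)).2,
        (key 1 2 (by decide)).1, (key 1 2 (by decide)).2, hrel, mul_smul, mul_smul,
        add_zero, ← smul_add]
      refine congrArg _ ?_
      funext k
      fin_cases k <;>
        simp [hQdef, Pi.smul_apply, Pi.sub_apply, smul_eq_mul, hz2, hc0, hs0, hc1, hs1,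
          hc2, hs2, hc0', hs0', hc1', hs1', hc2', hs2'] <;>
        first
          | ring1
          | linear_combination (m * z * r ^ 2 / 2) * h3
          | linear_combination (-(m * z * r ^ 2 / 2)) * h3          | linear_combination (-(m * z * r ^ 2 / 2)) * h3
          | linear_combination (m * z * r ^ 2 / 4) * h3
          | linear_combination (-(m * z * r ^ 2 / 4)) * h3
    · simp only [Fin.zero_eta, Fin.mk_one, Fin.reduceFinMk, Fin.isValue]
      rw [hzero, (key 2 0 (by decide)).1, (key 2 0 (by decide)).2,
        (key 2 1 (by decide)).1, (key 2 1 (by decide)).2, hrel, mul_smul, mul_smul,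
        add_zero, ← smul_add]
      refine congrArg _ ?_
      funext k
      fin_cases k <;>
        simp [hQdef, Pi.smul_apply, Pi.sub_apply, smul_eq_mul, hz2, hc0, hs0, hc1, hs1,
          hc2, hs2, hc0', hs0', hc1', hs1', hc2', hs2'] <;>
        first
          | ring1
          | linear_combination (m * z * r ^ 2 / 2) * h3
          | linear_combination (-(m * z * r ^ 2 / 2)) * h3
  · rw [neg_div, neg_lt_zero]
    exact div_pos hm (by positivity)
  · intro i j hij
    exact key i j hij
end
end
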